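/- arXiv:2305.04178 — 6 statements merged into one kernel-verified Lean document; each statement's English description precedes it below -/
import Mathlib

section
/- Let μ = (μ₁,…,μ_s) be a partition of n with s ≥ 2, and let 2 ≤ i ≤ s with μ_{i-1} > μ_i. Then f(μ↑_i − 1̂) ≥ f(μ − 1̂), with equality if and only if μ₁ = 3, μ_t = 2 for 2 ≤ t ≤ i−1, and μ_t = 1 for i ≤ t ≤ s. -/
/-- The odd double factorial `(2k-1)!! = 1 * 3 * ... * (2k-1)`, with `odf 0 = 1`. -/
def odf (k : Nat) : Int := ∏ j ∈ Finset.Icc 1 k, (2 * (j : Int) - 1)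

/-- Subtract `k` from every part, deleting parts that become zero. -/
def subHat (k : Nat) (l : List Nat) : List Nat :=
  (l.map (fun x => x - k)).filter (fun x => x ≠ 0)

/-- `l` is a partition: a non-increasing list of positive integers. -/
def IsPartition (l : List Nat) : Prop := l.Chain' (· ≥ ·) ∧ ∀ x ∈ l, 0 < x

/-- Increase the `i`-th part (1-based indexing). -/
def upAt (i : Nat) (l : List Nat) : List Nat := l.set (i - 1) (l.getD (i - 1) 0 + 1)

/-- Decrease the `j`-th part (1-based indexing), deleting it if it becomes zero. -/
def downAt (j : Nat) (l : List Nat) : List Nat :=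
  (l.set (j - 1) (l.getD (j - 1) 0 - 1)).filter (fun x => x ≠ 0)


set_option linter.unusedSectionVars false

lemma odf_pos (k : Nat) : 0 < odf k := by
  refine Finset.prod_pos ?_
  intro j hj
  rw [Finset.mem_Icc] at hj
  have : 1 ≤ j := hj.1
  omega

lemma d_nonneg_pos (d : Nat → Int) (hd0 : d 0 = 1) (hd1 : d 1 = 0)
    (hd : ∀ n : Nat, 2 ≤ n → d n = 2 * ((n : Int) - 1) * (d (n - 1) + d (n - 2))) :
    ∀ n, 0 ≤ d n ∧ (n ≠ 1 → 0 < d n) := by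
  intro n
  induction n using Nat.strong_induction_on with
  | _ n ih =>
    match n with
    | 0 => simp [hd0]
    | 1 => simp [hd1]
    | (m+2) =>
      rw [hd (m+2) (by omega)]
      have h1 := ih (m+1) (by omega)
      have h2 := ih m (by omega)
      have hsum : 0 < d (m+1) + d m := by
        rcases Nat.eq_zero_or_pos m with rfl | hm
        · rw [hd0, hd1]; norm_num
        · have := h1.2 (by omega)
          linarith [h2.1]
      have hc : (0:ℤ) < 2 * ((m+2 : Nat) : ℤ) - 2 := by push_cast; omega
      constructor
      · have : (0:ℤ) < 2 * (((m+2 : Nat) : ℤ) - 1) * (d (m + 2 - 1) + d (m + 2 - 2)) := by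
          apply mul_pos
          · push_cast; omega
          · simpa using hsum
        linarith
      · intro _
        apply mul_pos
        · push_cast; omega
        · simpa using hsum

lemma isPartition_iff (l : List Nat) :
    IsPartition l ↔ l.Pairwise (· ≥ ·) ∧ ∀ x ∈ l, 0 < x := by
  rw [IsPartition, List.Chain', List.isChain_iff_pairwise]

lemma subHat_append (k : Nat) (l₁ l₂ : List Nat) :
    subHat k (l₁ ++ l₂) = subHat k l₁ ++ subHat k l₂ := by
  simp [subHat]

lemma mem_subHat {k x : Nat} {l : List Nat} :
    x ∈ subHat k l ↔ x ≠ 0 ∧ ∃ y ∈ l, y - k = x := by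
  simp [subHat, List.mem_filter, List.mem_map]
  tauto

lemma isPartition_subHat {k : Nat} {l : List Nat} (h : IsPartition l) :
    IsPartition (subHat k l) := by
  rw [isPartition_iff] at h ⊢
  constructor
  · apply List.Pairwise.filter
    exact (h.1.map _ (fun a b hab => by simpa using Nat.sub_le_sub_right hab k))
  · intro x hx
    rw [mem_subHat] at hx
    omega

lemma isPartition_append_left {l₁ l₂ : List Nat} (h : IsPartition (l₁ ++ l₂)) :
    IsPartition l₁ := by
  rw [isPartition_iff] at h ⊢
  exact ⟨h.1.sublist (List.sublist_append_left _ _),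
    fun x hx => h.2 x (List.mem_append_left _ hx)⟩

lemma subHat_eq_map {k : Nat} {l : List Nat} (h : ∀ x ∈ l, k < x) :
    subHat k l = l.map (fun x => x - k) := by
  rw [subHat, List.filter_eq_self]
  intro a ha
  rw [List.mem_map] at ha
  obtain ⟨y, hy, rfl⟩ := ha
  have := h y hy
  simp; omega

lemma subHat_eq_nil {k : Nat} {l : List Nat} (h : ∀ x ∈ l, x ≤ k) :
    subHat k l = [] := by
  rw [subHat, List.filter_eq_nil_iff]
  intro a ha
  rw [List.mem_map] at ha
  obtain ⟨y, hy, rfl⟩ := ha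
  have := h y hy
  simp; omega

lemma subHat_sum_le (k : Nat) (l : List Nat) : (subHat k l).sum ≤ l.sum := by
  induction l with
  | nil => simp [subHat]
  | cons a l ih =>
    simp only [subHat, List.map_cons, List.filter_cons] at ih ⊢
    by_cases h : a - k = 0 <;> simp [h] at ih ⊢ <;> omega


lemma isPartition_concat_one {l : List Nat} (h : IsPartition l) :
    IsPartition (l ++ [1]) := by
  rw [isPartition_iff] at h ⊢
  constructor
  · rw [List.pairwise_append]
    refine ⟨h.1, by simp, ?_⟩
    intro x hx y hy
    simp at hy
    subst hy
    exact h.2 x hx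
  · intro x hx
    rw [List.mem_append] at hx
    rcases hx with hx | hx
    · exact h.2 x hx
    · simp at hx; omega

lemma part_facts {A B : List Nat} {b : Nat} (h : IsPartition (A ++ [b] ++ B)) :
    (∀ x ∈ A, b ≤ x) ∧ (∀ y ∈ B, y ≤ b) ∧ 0 < b ∧ IsPartition B := by
  rw [isPartition_iff] at h
  obtain ⟨hp, hpos⟩ := h
  rw [List.append_assoc, List.singleton_append, List.pairwise_append] at hp
  obtain ⟨hpA, hpbB, hAB⟩ := hp
  rw [List.pairwise_cons] at hpbB
  refine ⟨?_, ?_, ?_, ?_⟩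
  · intro x hx; exact hAB x hx b (by simp)
  · intro y hy; exact hpbB.1 y hy
  · exact hpos b (by simp)
  · rw [isPartition_iff]
    exact ⟨hpbB.2, fun x hx => hpos x (by simp [hx])⟩

lemma isPartition_bump {A B : List Nat} {b : Nat} (h : IsPartition (A ++ [b] ++ B))
    (hA : ∀ x ∈ A, b < x) : IsPartition (A ++ [b+1] ++ B) := by
  rw [isPartition_iff] at h ⊢
  obtain ⟨hp, hpos⟩ := h
  rw [List.append_assoc, List.singleton_append, List.pairwise_append] at hp ⊢
  obtain ⟨hpA, hpbB, hAB⟩ := hp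
  rw [List.pairwise_cons] at hpbB ⊢
  refine ⟨⟨hpA, ⟨fun y hy => by have := hpbB.1 y hy; omega, hpbB.2⟩, ?_⟩, ?_⟩
  · intro x hx y hy
    rcases List.mem_cons.mp hy with rfl | hy
    · exact hA x hx
    · exact hAB x hx y (by simp [hy])
  · intro x hx
    simp only [List.append_assoc, List.singleton_append, List.mem_append, List.mem_cons] at hx ⊢
    rcases hx with hx | rfl | hx
    · exact hpos x (by simp [hx])
    · omega
    · exact hpos x (by simp [hx])

lemma pascal_sum (b : Nat) (T : Nat → Int) :
    ∑ k ∈ Finset.Icc 1 (b+1), ((b+1).choose k : Int) * T k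
      = ∑ k ∈ Finset.Icc 1 b, (b.choose k : Int) * T k
        + ∑ k ∈ Finset.Icc 1 (b+1), (b.choose (k-1) : Int) * T k := by
  have step : ∀ k ∈ Finset.Icc 1 (b+1), ((b+1).choose k : Int) * T k
      = (b.choose k : Int) * T k + (b.choose (k-1) : Int) * T k := by
    intro k hk
    rw [Finset.mem_Icc] at hk
    obtain ⟨m, rfl⟩ : ∃ m, k = m + 1 := ⟨k - 1, by omega⟩
    rw [Nat.choose_succ_succ', show m + 1 - 1 = m from rfl]
    push_cast
    ring
  rw [Finset.sum_congr rfl step, Finset.sum_add_distrib]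
  congr 1
  rw [Finset.sum_Icc_succ_top (by omega : 1 ≤ b + 1), Nat.choose_succ_self]
  simp

lemma getLastD_concat' (X : List Nat) (a : Nat) : (X ++ [a]).getLastD 0 = a := by simp

lemma dropLast_concat' (X : List Nat) (a : Nat) : (X ++ [a]).dropLast = X := by simp

lemma subHat_singleton_pos {k b : Nat} (h : k < b) : subHat k [b] = [b - k] := by
  simp [subHat]; omega

lemma subHat_singleton_zero {k b : Nat} (h : b ≤ k) : subHat k [b] = [] := by
  simp [subHat]; omega


lemma set_append_length (A rest : List Nat) (v : Nat) :
    (A ++ rest).set A.length v = A ++ rest.set 0 v := by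
  induction A with
  | nil => simp
  | cons a A ih => simp [ih]

lemma subHat_two_eq_one_iff {A : List Nat} (hp : A.Pairwise (· ≥ ·))
    (h2 : ∀ x ∈ A, 2 ≤ x) (hne : A ≠ []) :
    subHat 2 A = [1] ↔ ∃ t, A = 3 :: t ∧ ∀ x ∈ t, x = 2 := by
  constructor
  · intro hS
    have hle3 : ∀ x ∈ A, x ≤ 3 := by
      intro x hx
      by_contra hgt
      have hm : x - 2 ∈ subHat 2 A := mem_subHat.mpr ⟨by omega, x, hx, rfl⟩
      rw [hS] at hm; simp at hm; omega
    obtain ⟨h, t, rfl⟩ := List.exists_cons_of_ne_nil hne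
    have hh3 : h = 3 := by
      rcases Nat.lt_or_ge h 3 with hlt | hge
      · exfalso
        have hall : ∀ x ∈ h :: t, x ≤ 2 := by
          intro x hx
          have hxh : x ≤ h := by
            rcases List.mem_cons.mp hx with rfl | hx'
            · exact le_rfl
            · exact (List.pairwise_cons.mp hp).1 x hx'
          omega
        rw [subHat_eq_nil hall] at hS
        exact absurd hS (by simp)
      · have := hle3 h (by simp); omega
    subst hh3
    refine ⟨t, rfl, ?_⟩
    intro x hxt
    have hx2 := h2 x (by simp [hxt])
    have hx3 := hle3 x (by simp [hxt])
    by_contra hx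
    have hx3' : x = 3 := by omega
    subst hx3'
    have hsub : [3, 3].Sublist (3 :: t) :=
      List.cons_sublist_cons.mpr (List.singleton_sublist.mpr hxt)
    have hmapsub : ([3, 3].map (fun x => x - 2)).Sublist
        ((3 :: t).map (fun x => x - 2)) := hsub.map _
    have hfsub := hmapsub.filter (fun x => x ≠ 0)
    rw [show ([3,3].map (fun x => x - 2)).filter (fun x => x ≠ 0) = [1, 1] by decide] at hfsub
    rw [show ((3 :: t).map (fun x => x - 2)).filter (fun x => x ≠ 0) = subHat 2 (3 :: t)
      from rfl, hS] at hfsub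
    simpa using hfsub.length_le
  · rintro ⟨t, rfl, ht⟩
    have e1 : subHat 2 (3 :: t) = 1 :: subHat 2 t := by
      simp [subHat]
    rw [e1, subHat_eq_nil (fun x hx => by rw [ht x hx])]

lemma take_getElem_eq (μ A : List Nat) (n j : Nat) (hA : A = μ.take n)
    (hj : j < A.length) (hjm : j < μ.length) : A[j]'hj = μ[j]'hjm := by
  subst hA
  have h2 : (μ.take n).length ≤ n := List.length_take_le n μ
  exact (List.getElem_take' hjm (lt_of_lt_of_le hj h2)).symm


lemma odf_one : odf 1 = 1 := by simp [odf]

section F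
variable (d : Nat → Int) (hd0 : d 0 = 1) (hd1 : d 1 = 0)
    (hd : ∀ n : Nat, 2 ≤ n → d n = 2 * ((n : Int) - 1) * (d (n - 1) + d (n - 2)))
    (f : List Nat → Int) (hf0 : f [] = 1) (hf1 : ∀ m : Nat, f [m] = d m)
    (hfr : ∀ l : List Nat, IsPartition l → 2 ≤ l.length →
      f l = f l.dropLast + ∑ k ∈ Finset.Icc 1 (l.getLastD 0),
        ((l.getLastD 0).choose k : Int) * odf k * f (subHat k l.dropLast))

include hd0 hd1 hd hf0 hf1 hfr

lemma f_nonneg_pos :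
    ∀ l : List Nat, IsPartition l → 0 ≤ f l ∧ (l ≠ [1] → 0 < f l) := by
  suffices H : ∀ N l, l.sum ≤ N → IsPartition l → 0 ≤ f l ∧ (l ≠ [1] → 0 < f l) by
    exact fun l hl => H l.sum l le_rfl hl
  intro N
  induction N with
  | zero =>
    intro l hsum hl
    have hnil : l = [] := by
      cases l with
      | nil => rfl
      | cons a t =>
        have ha := hl.2 a (by simp)
        simp [List.sum_cons] at hsum; omega
    subst hnil; simp [hf0]
  | succ N ih =>
    intro l hsum hl
    match l, hl with
    | [], _ => simp [hf0]
    | [m], hl =>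
      have hm := (d_nonneg_pos d hd0 hd1 hd m)
      rw [hf1]
      refine ⟨hm.1, fun hne => hm.2 (by simpa using hne)⟩
    | (a :: b :: t), hl =>
      set l : List Nat := a :: b :: t with hldef
      have hlne : l ≠ [] := by simp [hldef]
      have hlen : 2 ≤ l.length := by simp [hldef]
      have hconc : l.dropLast ++ [l.getLast hlne] = l := List.dropLast_append_getLast hlne
      have hlastD : l.getLastD 0 = l.getLast hlne := by
        conv_lhs => rw [← hconc]
        simp
      have hlastpos : 0 < l.getLast hlne := hl.2 _ (List.getLast_mem hlne)
      have hsumdec : l.dropLast.sum + l.getLast hlne = l.sum := by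
        conv_rhs => rw [← hconc]
        simp
      have hdpart : IsPartition l.dropLast := by
        apply isPartition_append_left (l₂ := [l.getLast hlne]); rw [hconc]; exact hl
      have hdsum : l.dropLast.sum ≤ N := by omega
      have hterm : ∀ k ∈ Finset.Icc 1 (l.getLastD 0),
          0 ≤ ((l.getLastD 0).choose k : Int) * odf k * f (subHat k l.dropLast) := by
        intro k hk
        have h1 : (0:ℤ) ≤ ((l.getLastD 0).choose k : Int) := by positivity
        have h2 := odf_pos k
        have h3 : 0 ≤ f (subHat k l.dropLast) := by
          refine (ih _ ?_ (isPartition_subHat hdpart)).1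
          calc (subHat k l.dropLast).sum ≤ l.dropLast.sum := subHat_sum_le _ _
            _ ≤ N := hdsum
        positivity
      have hS : 0 ≤ ∑ k ∈ Finset.Icc 1 (l.getLastD 0),
          ((l.getLastD 0).choose k : Int) * odf k * f (subHat k l.dropLast) :=
        Finset.sum_nonneg hterm
      have hdnn := ih l.dropLast hdsum hdpart
      rw [hfr l hl hlen]
      constructor
      · linarith [hdnn.1]
      · intro _
        by_cases hD : l.dropLast = [1]
        · -- l = [1,1]
          have hl11 : l = [1, 1] := by
            have h1 : a = 1 ∧ t = [] := by
              have : l.dropLast = a :: (b :: t).dropLast := by simp [hldef]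
              rw [hD] at this
              cases t with
              | nil => simp at this ⊢; omega
              | cons c s => simp at this
            have hb1 : b = 1 := by
              have hba : b ≤ a := by
                rw [isPartition_iff] at hl
                exact (List.pairwise_cons.mp hl.1).1 b (by simp [hldef])
              have := hl.2 b (by rw [hldef]; simp)
              omega
            simp [hldef, h1.1, h1.2, hb1]
          rw [hl11]
          have e1 : ([1,1] : List Nat).dropLast = [1] := rfl
          have e2 : ([1,1] : List Nat).getLastD 0 = 1 := rfl
          rw [e1, e2, show Finset.Icc 1 1 = {1} from Finset.Icc_self 1, Finset.sum_singleton]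
          have hsub : subHat 1 [1] = ([] : List Nat) := by norm_num [subHat]
          rw [hsub, hf0, hf1, hd1, odf_one]
          norm_num
        · have := hdnn.2 hD
          linarith

end F


section F
variable (d : Nat → Int) (hd0 : d 0 = 1) (hd1 : d 1 = 0)
    (hd : ∀ n : Nat, 2 ≤ n → d n = 2 * ((n : Int) - 1) * (d (n - 1) + d (n - 2)))
    (f : List Nat → Int) (hf0 : f [] = 1) (hf1 : ∀ m : Nat, f [m] = d m)
    (hfr : ∀ l : List Nat, IsPartition l → 2 ≤ l.length →
      f l = f l.dropLast + ∑ k ∈ Finset.Icc 1 (l.getLastD 0),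
        ((l.getLastD 0).choose k : Int) * odf k * f (subHat k l.dropLast))

include hd0 hd1 hd hf0 hf1 hfr

lemma f_concat_one {l : List Nat} (hl : IsPartition l) (hne : l ≠ []) :
    f (l ++ [1]) = f l + f (subHat 1 l) := by
  have h2 : 2 ≤ (l ++ [1]).length := by
    have := List.length_pos_iff.mpr hne
    simp; omega
  rw [hfr (l ++ [1]) (isPartition_concat_one hl) h2]
  have e1 : (l ++ [1]).getLastD 0 = 1 := by simp
  have e2 : (l ++ [1]).dropLast = l := by simp
  rw [e1, e2, show Finset.Icc 1 1 = {1} from Finset.Icc_self 1, Finset.sum_singleton,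
      Nat.choose_self, odf_one]
  push_cast; ring

lemma lemB_base (A : List Nat) (b : Nat) (hpart : IsPartition (A ++ [b]))
    (hAne : A ≠ []) (hAgt : ∀ x ∈ A, b < x) :
    f (A ++ [b]) < f (A ++ [b+1]) := by
  have hpart' : IsPartition (A ++ [b] ++ []) := by simpa using hpart
  have hb : 0 < b := (part_facts hpart').2.2.1
  have hApart : IsPartition A := isPartition_append_left hpart
  have hbump : IsPartition (A ++ [b+1]) := by
    have := isPartition_bump hpart' hAgt
    simpa using this
  have hAlen := List.length_pos_iff.mpr hAne
  have hlen2 : 2 ≤ (A ++ [b]).length := by simp; omega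
  have hlen2' : 2 ≤ (A ++ [b+1]).length := by simp; omega
  rw [hfr (A ++ [b]) hpart hlen2, hfr (A ++ [b+1]) hbump hlen2']
  have e1 : (A ++ [b]).getLastD 0 = b := by simp
  have e1' : (A ++ [b+1]).getLastD 0 = b + 1 := by simp
  have e2 : (A ++ [b]).dropLast = A := by simp
  have e2' : (A ++ [b+1]).dropLast = A := by simp
  rw [e1, e1', e2, e2']
  simp only [mul_assoc]
  rw [pascal_sum b (fun k => odf k * f (subHat k A))]
  have hpos : 0 < ∑ k ∈ Finset.Icc 1 (b+1),
      (b.choose (k-1) : Int) * (odf k * f (subHat k A)) := by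
    apply Finset.sum_pos'
    · intro k _
      have h2 := odf_pos k
      have h3 : 0 ≤ f (subHat k A) :=
        (f_nonneg_pos d hd0 hd1 hd f hf0 hf1 hfr _ (isPartition_subHat hApart)).1
      positivity
    · by_cases hS : subHat (b+1) A = [1]
      · refine ⟨1, Finset.mem_Icc.mpr (by omega), ?_⟩
        have hmem1 : (1 : Nat) ∈ subHat (b+1) A := by rw [hS]; simp
        rw [mem_subHat] at hmem1
        obtain ⟨-, y, hyA, hy⟩ := hmem1
        have hy2 : y = b + 2 := by omega
        have hmem2 : b + 1 ∈ subHat 1 A := by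
          rw [mem_subHat]
          exact ⟨by omega, y, hyA, by omega⟩
        have hne1 : subHat 1 A ≠ [1] := by
          intro h
          rw [h] at hmem2
          simp at hmem2
          omega
        have hfp : 0 < f (subHat 1 A) :=
          (f_nonneg_pos d hd0 hd1 hd f hf0 hf1 hfr _ (isPartition_subHat hApart)).2 hne1
        have := odf_pos 1
        simp only [show (1:Nat) - 1 = 0 from rfl, Nat.choose_zero_right]
        push_cast
        nlinarith
      · refine ⟨b+1, Finset.mem_Icc.mpr (by omega), ?_⟩
        have hfp : 0 < f (subHat (b+1) A) :=
          (f_nonneg_pos d hd0 hd1 hd f hf0 hf1 hfr _ (isPartition_subHat hApart)).2 hS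
        have := odf_pos (b+1)
        simp only [show b + 1 - 1 = b from rfl, Nat.choose_self]
        push_cast
        nlinarith
  linarith

lemma lemB : ∀ (N : Nat) (B A : List Nat) (b : Nat), B.length ≤ N →
    IsPartition (A ++ [b] ++ B) → A ≠ [] → (∀ x ∈ A, b < x) →
    f (A ++ [b] ++ B) < f (A ++ [b+1] ++ B) := by
  intro N
  induction N with
  | zero =>
    intro B A b hlen hpart hAne hAgt
    have hB : B = [] := List.length_eq_zero_iff.mp (by omega)
    subst hB
    simpa using lemB_base d hd0 hd1 hd f hf0 hf1 hfr A b (by simpa using hpart) hAne hAgt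
  | succ N ih =>
    intro B A b hlen hpart hAne hAgt
    rcases List.eq_nil_or_concat B with rfl | ⟨B', a, hBc⟩
    case _ => simpa using lemB_base d hd0 hd1 hd f hf0 hf1 hfr A b (by simpa using hpart) hAne hAgt
    case _ =>
      rw [List.concat_eq_append] at hBc
      subst hBc
      have hshape : A ++ [b] ++ (B' ++ [a]) = (A ++ [b] ++ B') ++ [a] := by
        simp [List.append_assoc]
      have hshape' : A ++ [b+1] ++ (B' ++ [a]) = (A ++ [b+1] ++ B') ++ [a] := by
        simp [List.append_assoc]
      have hpart1 : IsPartition ((A ++ [b] ++ B') ++ [a]) := by rw [← hshape]; exact hpart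
      have hPpart : IsPartition (A ++ [b] ++ B') := isPartition_append_left hpart1
      have hQa : IsPartition ((A ++ [b+1] ++ B') ++ [a]) := by
        rw [← hshape']; exact isPartition_bump hpart hAgt
      have hQpart : IsPartition (A ++ [b+1] ++ B') := isPartition_append_left hQa
      have hAlen := List.length_pos_iff.mpr hAne
      have hlen1 : 2 ≤ ((A ++ [b] ++ B') ++ [a]).length := by simp; omega
      have hlen1' : 2 ≤ ((A ++ [b+1] ++ B') ++ [a]).length := by simp; omega
      -- facts about sizes
      have hfacts := part_facts hpart
      have haleb : a ≤ b := hfacts.2.1 a (by simp)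
      have hB'le : ∀ y ∈ B', y ≤ b := fun y hy => hfacts.2.1 y (by simp [hy])
      rw [hshape, hshape', hfr _ hpart1 hlen1, hfr _ hQa hlen1']
      have e1 : ((A ++ [b] ++ B') ++ [a]).getLastD 0 = a := getLastD_concat' _ _
      have e1' : ((A ++ [b+1] ++ B') ++ [a]).getLastD 0 = a := getLastD_concat' _ _
      have e2 : ((A ++ [b] ++ B') ++ [a]).dropLast = A ++ [b] ++ B' := dropLast_concat' _ _
      have e2' : ((A ++ [b+1] ++ B') ++ [a]).dropLast = A ++ [b+1] ++ B' := dropLast_concat' _ _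
      rw [e1, e1', e2, e2']
      have h1 : f (A ++ [b] ++ B') < f (A ++ [b+1] ++ B') := by
        refine ih B' A b ?_ hPpart hAne hAgt
        simp at hlen; omega
      have h2 : ∑ k ∈ Finset.Icc 1 a, ((a.choose k : Int)) * odf k * f (subHat k (A ++ [b] ++ B'))
          ≤ ∑ k ∈ Finset.Icc 1 a, ((a.choose k : Int)) * odf k * f (subHat k (A ++ [b+1] ++ B')) := by
        apply Finset.sum_le_sum
        intro k hk
        rw [Finset.mem_Icc] at hk
        have hkb : k ≤ b := le_trans hk.2 haleb
        have hkey : f (subHat k (A ++ [b] ++ B')) ≤ f (subHat k (A ++ [b+1] ++ B')) := by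
          rw [subHat_append, subHat_append, subHat_append, subHat_append]
          have hSAgt : ∀ x ∈ subHat k A, b - k < x := by
            intro x hx
            rw [mem_subHat] at hx
            obtain ⟨-, y, hyA, rfl⟩ := hx
            have := hAgt y hyA
            omega
          have hSAne : subHat k A ≠ [] := by
            rw [subHat_eq_map (fun x hx => lt_of_le_of_lt hkb (hAgt x hx))]
            simpa using hAne
          have hSApart : IsPartition (subHat k A) :=
            isPartition_subHat (isPartition_append_left (isPartition_append_left hPpart))
          by_cases hkltb : k < b
          · have em : subHat k [b] = [b - k] := subHat_singleton_pos hkltb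
            have em' : subHat k [b+1] = [(b - k) + 1] := by
              have h1 : b + 1 - k = b - k + 1 := by omega
              rw [show subHat k [b+1] = [b + 1 - k] from subHat_singleton_pos (by omega), h1]
            rw [em, em']
            refine le_of_lt (ih (subHat k B') (subHat k A) (b - k) ?_ ?_ hSAne hSAgt)
            · have : (subHat k B').length ≤ B'.length := by
                calc (subHat k B').length ≤ (B'.map (fun x => x - k)).length :=
                      List.length_filter_le _ _
                  _ = B'.length := List.length_map _
              simp at hlen; omega
            · have : subHat k (A ++ [b] ++ B')
                  = subHat k A ++ [b - k] ++ subHat k B' := by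
                rw [subHat_append, subHat_append, em]
              rw [← this]
              exact isPartition_subHat hPpart
          · have hkb' : k = b := by omega
            have em : subHat k [b] = [] := subHat_singleton_zero (by omega)
            have em' : subHat k [b+1] = [1] := by
              rw [show subHat k [b+1] = [b + 1 - k] from subHat_singleton_pos (by omega)]
              congr 1; omega
            have eB : subHat k B' = [] := subHat_eq_nil (fun y hy => by
              have := hB'le y hy; omega)
            rw [em, em', eB]
            simp only [List.append_nil]
            rw [f_concat_one d hd0 hd1 hd f hf0 hf1 hfr hSApart hSAne]
            have : 0 ≤ f (subHat 1 (subHat k A)) :=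
              (f_nonneg_pos d hd0 hd1 hd f hf0 hf1 hfr _ (isPartition_subHat hSApart)).1
            linarith
        have hC : (0:ℤ) ≤ (a.choose k : Int) := by positivity
        have hodf := odf_pos k
        have := mul_le_mul_of_nonneg_left hkey (le_of_lt hodf)
        nlinarith
      linarith

end F

theorem stmt9
    (d : Nat → Int) (hd0 : d 0 = 1) (hd1 : d 1 = 0)
    (hd : ∀ n : Nat, 2 ≤ n → d n = 2 * ((n : Int) - 1) * (d (n - 1) + d (n - 2)))
    (f : List Nat → Int) (hf0 : f [] = 1) (hf1 : ∀ m : Nat, f [m] = d m)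
    (hfr : ∀ l : List Nat, IsPartition l → 2 ≤ l.length →
      f l = f l.dropLast + ∑ k ∈ Finset.Icc 1 (l.getLastD 0),
        ((l.getLastD 0).choose k : Int) * odf k * f (subHat k l.dropLast))
    (μ : List Nat) (hμ : IsPartition μ) (hs : 2 ≤ μ.length)
    (i : Nat) (hi2 : 2 ≤ i) (his : i ≤ μ.length)
    (hlt : μ.getD (i - 1) 0 < μ.getD (i - 2) 0) :
    f (subHat 1 μ) ≤ f (subHat 1 (upAt i μ))
      ∧ (f (subHat 1 (upAt i μ)) = f (subHat 1 μ) ↔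
        (μ.getD 0 0 = 3 ∧ (∀ t : Nat, 2 ≤ t → t + 1 ≤ i → μ.getD (t - 1) 0 = 2)
          ∧ (∀ t : Nat, i ≤ t → t ≤ μ.length → μ.getD (t - 1) 0 = 1))) := by
  obtain ⟨hpair, hpos⟩ := (isPartition_iff μ).mp hμ
  rw [List.pairwise_iff_getElem] at hpair
  have hpl : i - 1 < μ.length := by omega
  have hql : i - 2 < μ.length := by omega
  set A : List Nat := μ.take (i-1) with hA
  set B : List Nat := μ.drop i with hB
  set b : Nat := μ[i-1] with hbdef
  have hgetD : μ.getD (i-1) 0 = b := List.getD_eq_getElem μ 0 hpl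
  have hgetD2 : μ.getD (i-2) 0 = μ[i-2] := List.getD_eq_getElem μ 0 hql
  have hltg : b < μ[i-2] := by rw [hgetD, hgetD2] at hlt; exact hlt
  have hdecomp : μ = A ++ [b] ++ B := by
    rw [List.append_assoc, List.singleton_append]
    conv_lhs => rw [← List.take_append_drop (i-1) μ]
    congr 1
    rw [List.drop_eq_getElem_cons hpl, show i - 1 + 1 = i from by omega]
  have hAlen : A.length = i - 1 := by
    rw [hA, List.length_take]; omega
  have hAne : A ≠ [] := by
    intro h
    rw [h] at hAlen; simp at hAlen; omega
  have hAelem : ∀ x ∈ A, ∃ j, j < i - 1 ∧ ∃ hj : j < μ.length, μ[j] = x := by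
    intro x hx
    rw [List.mem_iff_getElem] at hx
    obtain ⟨j, hj, hjx⟩ := hx
    rw [hAlen] at hj
    refine ⟨j, hj, by omega, ?_⟩
    rw [← hjx]
    exact (take_getElem_eq μ A (i-1) j hA (by omega) (by omega)).symm
  have hAgt : ∀ x ∈ A, b < x := by
    intro x hx
    obtain ⟨j, hj, hjl, rfl⟩ := hAelem x hx
    rcases Nat.lt_or_ge j (i-2) with hj2 | hj2
    · have := hpair j (i-2) hjl hql hj2
      omega
    · have : j = i - 2 := by omega
      subst this
      omega
  have hμ' : IsPartition (A ++ [b] ++ B) := hdecomp ▸ hμ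
  have hBle : ∀ y ∈ B, y ≤ b := (part_facts hμ').2.1
  have hbpos : 0 < b := (part_facts hμ').2.2.1
  have hup : upAt i μ = A ++ [b+1] ++ B := by
    rw [upAt, hgetD]
    conv_lhs => rw [hdecomp]
    rw [List.append_assoc, List.singleton_append,
        show i - 1 = A.length from hAlen.symm, set_append_length]
    simp [List.append_assoc]
  have hSAne : subHat 1 A ≠ [] := by
    rw [subHat_eq_map (fun x hx => by have := hAgt x hx; omega)]
    simpa using hAne
  have hSApart : IsPartition (subHat 1 A) :=
    isPartition_subHat (isPartition_append_left (isPartition_append_left hμ'))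
  rcases Nat.lt_or_ge b 2 with hb1 | hb2
  · -- b = 1 case
    have hb1' : b = 1 := by omega
    have eB : subHat 1 B = [] := subHat_eq_nil (fun y hy => by have := hBle y hy; omega)
    have eb : subHat 1 [b] = [] := subHat_singleton_zero (by omega)
    have eL : subHat 1 μ = subHat 1 A := by
      conv_lhs => rw [hdecomp]
      rw [subHat_append, subHat_append, eb, eB]
      try simp
    have eR : subHat 1 (upAt i μ) = subHat 1 A ++ [1] := by
      rw [hup, subHat_append, subHat_append, eB,
          show subHat 1 [b+1] = [1] by
            rw [hb1']; decide]
      try simp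
    rw [eL, eR, f_concat_one d hd0 hd1 hd f hf0 hf1 hfr hSApart hSAne]
    have hnn : 0 ≤ f (subHat 1 (subHat 1 A)) :=
      (f_nonneg_pos d hd0 hd1 hd f hf0 hf1 hfr _ (isPartition_subHat hSApart)).1
    have hA2 : ∀ x ∈ A, 2 ≤ x := fun x hx => by have := hAgt x hx; omega
    have hmapA : subHat 1 A = A.map (fun x => x - 1) :=
      subHat_eq_map (fun x hx => by have := hAgt x hx; omega)
    have hSS : subHat 1 (subHat 1 A) = subHat 2 A := by
      calc subHat 1 (subHat 1 A)
          = ((A.map (fun x => x - 1)).map (fun x => x - 1)).filter (fun x => x ≠ 0) := by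
            rw [hmapA]; rfl
        _ = (A.map (fun x => x - 2)).filter (fun x => x ≠ 0) := by
            rw [List.map_map]
            congr 1
            try exact List.map_congr_left (fun x _ => by simp; omega)
        _ = subHat 2 A := rfl
    have hApair : A.Pairwise (· ≥ ·) :=
      ((isPartition_iff A).mp (isPartition_append_left (isPartition_append_left hμ'))).1
    have hchar := subHat_two_eq_one_iff hApair hA2 hAne
    have hzero_iff : f (subHat 1 (subHat 1 A)) = 0 ↔ subHat 1 (subHat 1 A) = [1] := by
      constructor
      · intro h0
        by_contra hne
        have := (f_nonneg_pos d hd0 hd1 hd f hf0 hf1 hfr _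
          (isPartition_subHat hSApart)).2 hne
        omega
      · intro h; rw [h, hf1, hd1]
    have hthird : ∀ t : Nat, i ≤ t → t ≤ μ.length → μ.getD (t - 1) 0 = 1 := by
      intro t hit htl
      have htl' : t - 1 < μ.length := by omega
      rw [List.getD_eq_getElem μ 0 htl']
      have hle : μ[t-1] ≤ b := by
        rcases Nat.lt_or_ge (i-1) (t-1) with h | h
        · exact hpair (i-1) (t-1) hpl htl' h
        · have e : μ[t-1]'htl' = μ[i-1]'hpl := by congr 1; omega
          rw [hbdef, e]
      have := hpos μ[t-1] (List.getElem_mem htl')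
      omega
    refine ⟨by linarith, ?_⟩
    constructor
    · intro heq
      have h0 : f (subHat 1 (subHat 1 A)) = 0 := by linarith
      obtain ⟨t, hAt, ht2⟩ := hchar.mp (by rw [← hSS]; exact hzero_iff.mp h0)
      refine ⟨?_, ?_, hthird⟩
      · have h0l : 0 < μ.length := by omega
        rw [List.getD_eq_getElem μ 0 h0l]
        have e : μ[0] = A[0]'(by rw [hAlen]; omega) :=
          (take_getElem_eq μ A (i-1) 0 hA (by rw [hAlen]; omega) (by omega)).symm
        rw [e]
        simp [hAt]
      · intro t' h2t h3t
        have htl' : t' - 1 < μ.length := by omega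
        rw [List.getD_eq_getElem μ 0 htl']
        have hjA : t' - 1 < A.length := by omega
        have e : μ[t'-1] = A[t'-1]'hjA :=
          (take_getElem_eq μ A (i-1) (t'-1) hA hjA (by omega)).symm
        rw [e]
        have e2 : A[t'-1]'hjA = t[t'-2]'(by rw [hAt] at hjA; simp at hjA; omega) := by
          simp only [hAt]
          simp only [show t' - 1 = (t' - 2) + 1 from by omega, List.getElem_cons_succ]
        rw [e2]
        exact ht2 _ (List.getElem_mem _)
    · rintro ⟨h1, h2, -⟩
      obtain ⟨h, t, hAt⟩ := List.exists_cons_of_ne_nil hAne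
      have hh3 : h = 3 := by
        have h0l : 0 < μ.length := by omega
        rw [List.getD_eq_getElem μ 0 h0l] at h1
        have e : μ[0] = A[0]'(by rw [hAlen]; omega) :=
          (take_getElem_eq μ A (i-1) 0 hA (by rw [hAlen]; omega) (by omega)).symm
        rw [e] at h1
        simpa [hAt] using h1
      have ht2 : ∀ x ∈ t, x = 2 := by
        intro x hx
        rw [List.mem_iff_getElem] at hx
        obtain ⟨j, hj, rfl⟩ := hx
        have hjA : j + 1 < A.length := by rw [hAt]; simpa using hj
        have hjlen : j + 1 < i - 1 := by omega
        have e2 : t[j]'hj = A[j+1]'hjA := by simp [hAt]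
        have e : A[j+1]'hjA = μ[j+1]'(by omega) :=
          take_getElem_eq μ A (i-1) (j+1) hA hjA (by omega)
        have := h2 (j+2) (by omega) (by omega)
        rw [List.getD_eq_getElem μ 0 (by omega : j + 2 - 1 < μ.length)] at this
        simp only [show j + 2 - 1 = j + 1 from by omega] at this
        rw [e2, e]
        exact this
      have hS2 : subHat 2 A = [1] := hchar.mpr ⟨t, by rw [hAt, hh3], ht2⟩
      have h0 : f (subHat 1 (subHat 1 A)) = 0 := hzero_iff.mpr (by rw [hSS]; exact hS2)
      rw [h0]; ring
  · -- b ≥ 2 case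
    have eL : subHat 1 μ = subHat 1 A ++ [b - 1] ++ subHat 1 B := by
      conv_lhs => rw [hdecomp]
      rw [subHat_append, subHat_append, subHat_singleton_pos (by omega : 1 < b)]
    have eR : subHat 1 (upAt i μ) = subHat 1 A ++ [(b-1)+1] ++ subHat 1 B := by
      rw [hup, subHat_append, subHat_append, subHat_singleton_pos (by omega : 1 < b + 1),
          show b + 1 - 1 = (b-1)+1 from by omega]
    have hSAgt : ∀ x ∈ subHat 1 A, b - 1 < x := by
      intro x hx
      rw [mem_subHat] at hx
      obtain ⟨-, y, hy, rfl⟩ := hx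
      have := hAgt y hy
      omega
    have hSpart : IsPartition (subHat 1 A ++ [b-1] ++ subHat 1 B) := by
      rw [← eL]; exact isPartition_subHat hμ
    have hstrict := lemB d hd0 hd1 hd f hf0 hf1 hfr (subHat 1 B).length (subHat 1 B)
      (subHat 1 A) (b-1) le_rfl hSpart hSAne hSAgt
    rw [eL, eR]
    refine ⟨le_of_lt hstrict, ?_⟩
    constructor
    · intro heq
      exact absurd heq (ne_of_gt hstrict)
    · rintro ⟨-, -, h3⟩
      have := h3 i le_rfl his
      rw [hgetD] at this
      omega
end

section
/- For all a ≥ 1 and b ≥ 0, f(2^a, 1^b) = a² + b(a−1) + 1, where (2^a, 1^b) is the partition with a parts equal to 2 followed by b parts equal to 1. -/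
lemma odf_two : odf 2 = 3 := by decide

lemma subHat_rep11 (n : Nat) : subHat 1 (List.replicate n 1) = [] := by
  simp [subHat, List.filter_replicate]

lemma subHat_rep12 (n : Nat) : subHat 1 (List.replicate n 2) = List.replicate n 1 := by
  simp [subHat, List.filter_replicate]

lemma subHat_rep22 (n : Nat) : subHat 2 (List.replicate n 2) = [] := by
  simp [subHat, List.filter_replicate]

lemma subHat_app (k : Nat) (l1 l2 : List Nat) :
    subHat k (l1 ++ l2) = subHat k l1 ++ subHat k l2 := by
  simp [subHat, List.filter_append]

lemma pw_rep (n m : Nat) : List.Pairwise (· ≥ ·) (List.replicate n m) := by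
  induction n with
  | zero => simp
  | succ n ih =>
    rw [List.replicate_succ, List.pairwise_cons]
    exact ⟨fun x hx => le_of_eq (List.eq_of_mem_replicate hx), ih⟩

lemma isPart (a b : Nat) : IsPartition (List.replicate a 2 ++ List.replicate b 1) := by
  constructor
  · unfold List.Chain'
    rw [List.isChain_iff_pairwise, List.pairwise_append]
    refine ⟨pw_rep a 2, pw_rep b 1, ?_⟩
    intro x hx y hy
    rw [List.eq_of_mem_replicate hx, List.eq_of_mem_replicate hy]
    norm_num
  · intro x hx
    rcases List.mem_append.1 hx with h | h <;> simp [List.eq_of_mem_replicate h]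

theorem stmt13
    (d : Nat → Int) (hd0 : d 0 = 1) (hd1 : d 1 = 0)
    (hd : ∀ n : Nat, 2 ≤ n → d n = 2 * ((n : Int) - 1) * (d (n - 1) + d (n - 2)))
    (f : List Nat → Int) (hf0 : f [] = 1) (hf1 : ∀ m : Nat, f [m] = d m)
    (hfr : ∀ l : List Nat, IsPartition l → 2 ≤ l.length →
      f l = f l.dropLast + ∑ k ∈ Finset.Icc 1 (l.getLastD 0),
        ((l.getLastD 0).choose k : Int) * odf k * f (subHat k l.dropLast)) :
    ∀ a b : Nat, 1 ≤ a →
      f (List.replicate a 2 ++ List.replicate b 1)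
        = (a : Int) ^ 2 + (b : Int) * ((a : Int) - 1) + 1 := by
  -- f of all-ones partition
  have hones : ∀ b : Nat, f (List.replicate (b + 1) 1) = (b : Int) := by
    intro b
    induction b with
    | zero => simpa using (hf1 1).trans hd1
    | succ c ih =>
      have hl : List.replicate (c + 2) 1 = List.replicate (c + 1) 1 ++ [1] :=
        List.replicate_succ' (n := c + 1) (a := 1)
      have hpart : IsPartition (List.replicate (c + 2) 1) := by
        simpa using isPart 0 (c + 2)
      have hlen : 2 ≤ (List.replicate (c + 2) 1).length := by simp
      have := hfr _ hpart hlen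
      rw [hl] at this
      rw [List.dropLast_concat] at this
      simp only [List.getLastD_concat] at this
      rw [hl, this]
      simp [subHat_rep11, odf_one, hf0, ih]
  -- f of all-twos partition
  have htwos : ∀ a : Nat, 1 ≤ a →
      f (List.replicate a 2) = (a : Int) ^ 2 + 1 := by
    intro a
    induction a with
    | zero => omega
    | succ c ih =>
      intro _
      rcases Nat.eq_zero_or_pos c with hc | hc
      · subst hc
        have : f [2] = d 2 := hf1 2
        rw [hd 2 (by norm_num), hd1, hd0] at this
        simpa using this
      · have hl : List.replicate (c + 1) 2 = List.replicate c 2 ++ [2] :=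
          List.replicate_succ' (n := c) (a := 2)
        have hpart : IsPartition (List.replicate (c + 1) 2) := by
          simpa using isPart (c + 1) 0
        have hlen : 2 ≤ (List.replicate (c + 1) 2).length := by simp; omega
        have := hfr _ hpart hlen
        rw [hl] at this
        rw [List.dropLast_concat] at this
        simp only [List.getLastD_concat] at this
        rw [show Finset.Icc 1 2 = {1, 2} by decide] at this
        rw [hl, this]
        rw [Finset.sum_insert (by decide), Finset.sum_singleton]
        rw [subHat_rep12, subHat_rep22, odf_one, odf_two, hf0, ih hc]
        obtain ⟨c', rfl⟩ : ∃ c', c = c' + 1 := ⟨c - 1, by omega⟩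
        rw [show List.replicate (c' + 1) 1 = List.replicate (c' + 1 - 1 + 1) 1 by norm_num,
          hones]
        simp only [show Nat.choose 2 1 = 2 from rfl, show Nat.choose 2 2 = 1 from rfl]
        push_cast
        ring
  intro a b ha
  induction b with
  | zero => simpa using htwos a ha
  | succ c ih =>
    have hl : List.replicate a 2 ++ List.replicate (c + 1) 1
        = (List.replicate a 2 ++ List.replicate c 1) ++ [1] := by
      rw [List.replicate_succ' (n := c) (a := 1), List.append_assoc]
    have hpart := isPart a (c + 1)
    have hlen : 2 ≤ (List.replicate a 2 ++ List.replicate (c + 1) 1).length := by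
      simp; omega
    have := hfr _ hpart hlen
    rw [hl] at this
    rw [List.dropLast_concat] at this
    simp only [List.getLastD_concat] at this
    rw [hl, this]
    rw [Finset.Icc_self, Finset.sum_singleton]
    rw [subHat_app, subHat_rep12, subHat_rep11, List.append_nil, odf_one, ih]
    obtain ⟨a', rfl⟩ : ∃ a', a = a' + 1 := ⟨a - 1, by omega⟩
    rw [show List.replicate (a' + 1) 1 = List.replicate (a' + 1 - 1 + 1) 1 by norm_num,
      hones]
    simp only [show Nat.choose 1 1 = 1 from rfl]
    push_cast
    ring
end

section
/- For all u, q ≥ 1, f(u+1, u^{q-1}) = 2u · (f(u, (u−1)^{q-1}) + f((u−1)^q)), where (u+1, u^{q-1}) is the partition with first part u+1 followed by q−1 parts equal to u, and partitions with parts equal to 0 have those parts deleted. -/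
lemma getLastD_rep (n a b : ℕ) : (List.replicate (n+1) a).getLastD b = a := by
  induction n generalizing b with
  | zero => rfl
  | succ n ih => rw [List.replicate_succ, List.getLastD_cons]; exact ih a

lemma getLastD_cons_rep (a b m : ℕ) : (a :: List.replicate (m+1) b).getLastD 0 = b := by
  rw [List.getLastD_cons]; exact getLastD_rep m b a

lemma dropLast_cons_rep (a b m : ℕ) :
    (a :: List.replicate (m+1) b).dropLast = a :: List.replicate m b := by
  rw [List.replicate_succ, List.dropLast_cons₂, ← List.replicate_succ, List.dropLast_replicate]
  simp

lemma part_cons_rep (a b m : ℕ) (hb : 0 < b) (hab : b ≤ a) :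
    IsPartition (a :: List.replicate m b) := by
  constructor
  · refine List.isChain_cons.2 ⟨?_, List.isChain_replicate_of_rel m le_rfl⟩
    intro y hy
    cases m with
    | zero => simp at hy
    | succ n => rw [List.replicate_succ] at hy; simp at hy; omega
  · intro x hx
    rcases List.mem_cons.1 hx with h | h
    · omega
    · have := List.eq_of_mem_replicate h; omega

lemma part_rep (b m : ℕ) (hb : 0 < b) : IsPartition (List.replicate m b) :=
  ⟨List.isChain_replicate_of_rel m le_rfl,
   fun x hx => by have := List.eq_of_mem_replicate hx; omega⟩

lemma subHat_cons_rep (k a b m : ℕ) :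
    subHat k (a :: List.replicate m b)
      = ((a-k) :: List.replicate m (b-k)).filter (fun x => x ≠ 0) := by
  simp [subHat]

lemma subHat_rep (k b m : ℕ) :
    subHat k (List.replicate m b) = (List.replicate m (b-k)).filter (fun x => x ≠ 0) := by
  simp [subHat]

lemma filter_rep_ne (b m : ℕ) (hb : b ≠ 0) :
    (List.replicate m b).filter (fun x => x ≠ 0) = List.replicate m b := by
  simp [List.filter_replicate, hb]

lemma filter_rep_zero (m : ℕ) : (List.replicate m 0).filter (fun x : ℕ => x ≠ 0) = [] := by
  simp [List.filter_replicate]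

lemma filter_cons_rep_ne (a b m : ℕ) (ha : a ≠ 0) (hb : b ≠ 0) :
    ((a :: List.replicate m b)).filter (fun x => x ≠ 0) = a :: List.replicate m b := by
  rw [List.filter_cons]; simp [ha, hb, filter_rep_ne b m hb]

lemma filter_cons_rep_zero (a m : ℕ) (ha : a ≠ 0) :
    ((a :: List.replicate m 0)).filter (fun x => x ≠ 0) = [a] := by
  rw [List.filter_cons]; simp [ha, filter_rep_zero]

lemma choose_key (w k : ℕ) : (w+1-k) * (w+1).choose k = (w+1) * w.choose k := by
  have h1 := Nat.add_one_mul_choose_eq w k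
  have h2 := Nat.choose_succ_right_eq (w+1) k
  rw [h1, h2, Nat.mul_comm]

theorem stmt14
    (d : Nat → Int) (hd0 : d 0 = 1) (hd1 : d 1 = 0)
    (hd : ∀ n : Nat, 2 ≤ n → d n = 2 * ((n : Int) - 1) * (d (n - 1) + d (n - 2)))
    (f : List Nat → Int) (hf0 : f [] = 1) (hf1 : ∀ m : Nat, f [m] = d m)
    (hfr : ∀ l : List Nat, IsPartition l → 2 ≤ l.length →
      f l = f l.dropLast + ∑ k ∈ Finset.Icc 1 (l.getLastD 0),
        ((l.getLastD 0).choose k : Int) * odf k * f (subHat k l.dropLast)) :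
    ∀ u q : Nat, 1 ≤ u → 1 ≤ q →
      f ((u + 1) :: List.replicate (q - 1) u)
        = 2 * (u : Int) * (f ((u :: List.replicate (q - 1) (u - 1)).filter (fun x => x ≠ 0))
            + f ((List.replicate q (u - 1)).filter (fun x => x ≠ 0))) := by
  suffices H : ∀ q : ℕ, 1 ≤ q → ∀ u : ℕ, 1 ≤ u →
      f ((u + 1) :: List.replicate (q - 1) u)
        = 2 * (u : Int) * (f ((u :: List.replicate (q - 1) (u - 1)).filter (fun x => x ≠ 0))
            + f ((List.replicate q (u - 1)).filter (fun x => x ≠ 0))) by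
    intro u q hu hq; exact H q hq u hu
  intro q hq
  induction q, hq using Nat.le_induction with
  | base =>
    intro u hu
    simp only [show (1:ℕ)-1 = 0 from rfl, List.replicate_zero, List.replicate_one]
    have hu0 : u ≠ 0 := by omega
    have hfilt : ([u] : List ℕ).filter (fun x => x ≠ 0) = [u] := by simp [hu0]
    rw [hfilt, hf1, hf1]
    rcases Nat.lt_or_ge u 2 with h1 | h2
    · obtain rfl : u = 1 := by omega
      have : ([1-1] : List ℕ).filter (fun x => x ≠ 0) = [] := by simp
      rw [this, hf0]
      have h2 := hd 2 le_rfl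
      norm_num at h2
      rw [hd1] at h2 ⊢
      rw [hd0] at h2
      push_cast
      linarith [h2]
    · have : ([u-1] : List ℕ).filter (fun x => x ≠ 0) = [u-1] := by
        simp; omega
      rw [this, hf1]
      have h3 := hd (u+1) (by omega)
      rw [show u+1-1 = u from rfl, show u+1-2 = u-1 from by omega] at h3
      rw [h3]; push_cast; ring
  | succ q hq IH =>
    intro u hu
    obtain ⟨q', rfl⟩ : ∃ q', q = q'+1 := ⟨q-1, by omega⟩
    simp only [Nat.add_sub_cancel] at IH ⊢
    have hA := hfr ((u+1) :: List.replicate (q'+1) u)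
      (part_cons_rep _ _ _ (by omega) (by omega)) (by simp)
    rw [getLastD_cons_rep, dropLast_cons_rep] at hA
    simp only [subHat_cons_rep] at hA
    rcases Nat.lt_or_ge u 2 with h1 | h2
    · -- u = 1
      obtain rfl : u = 1 := by omega
      rw [Finset.Icc_self, Finset.sum_singleton] at hA
      rw [show (1:ℕ)+1-1 = 1 from rfl, show (1:ℕ)-1 = 0 from rfl,
        filter_cons_rep_zero 1 q' one_ne_zero, hf1, hd1, mul_zero, add_zero] at hA
      rw [hA, IH 1 le_rfl]
      rw [show (1:ℕ)-1 = 0 from rfl, filter_cons_rep_zero 1 q' one_ne_zero,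
        filter_cons_rep_zero 1 (q'+1) one_ne_zero, filter_rep_zero, filter_rep_zero]
    · -- u ≥ 2
      obtain ⟨w, rfl⟩ : ∃ w, u = w+1 := ⟨u-1, by omega⟩
      have hw : 1 ≤ w := by omega
      -- recursion for B
      have hB := hfr ((w+1) :: List.replicate (q'+1) w)
        (part_cons_rep _ _ _ (by omega) (by omega)) (by simp)
      rw [getLastD_cons_rep, dropLast_cons_rep] at hB
      simp only [subHat_cons_rep] at hB
      -- recursion for C
      have hC := hfr (List.replicate (q'+1+1) w) (part_rep _ _ (by omega)) (by simp)
      rw [getLastD_rep, List.dropLast_replicate] at hC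
      simp only [Nat.add_sub_cancel, subHat_rep] at hC
      -- split the top term k = w+1 off hA's sum
      rw [Finset.sum_Icc_succ_top (by omega : 1 ≤ w+1)] at hA
      rw [show w+1+1-(w+1) = 1 from by omega, show w+1-(w+1) = 0 from by omega,
        filter_cons_rep_zero 1 q' one_ne_zero, hf1, hd1, mul_zero, add_zero] at hA
      -- rewrite the remaining sum of hA using IH
      have hXsum : ∑ k ∈ Finset.Icc 1 w, (((w+1).choose k : ℤ)) * odf k *
            f (((w+1+1-k) :: List.replicate q' (w+1-k)).filter (fun x => x ≠ 0))
          = ∑ k ∈ Finset.Icc 1 w, 2 * ((w+1 : ℕ) : ℤ) * (((w.choose k : ℕ) : ℤ) * odf k *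
              (f (((w+1-k) :: List.replicate q' (w-k)).filter (fun x => x ≠ 0))
                + f ((List.replicate (q'+1) (w-k)).filter (fun x => x ≠ 0)))) := by
        refine Finset.sum_congr rfl fun k hk => ?_
        simp only [Finset.mem_Icc] at hk
        rw [show w+1+1-k = (w+1-k)+1 from by omega,
          filter_cons_rep_ne _ _ _ (by omega) (by omega),
          IH (w+1-k) (by omega), show w+1-k-1 = w-k from by omega]
        have hc : ((w+1-k : ℕ) : ℤ) * (((w+1).choose k : ℕ) : ℤ)
            = (((w+1 : ℕ)) : ℤ) * ((w.choose k : ℕ) : ℤ) := by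
          exact_mod_cast congrArg (fun n : ℕ => (n : ℤ)) (choose_key w k)
        linear_combination (2 * odf k *
          (f (((w+1-k) :: List.replicate q' (w-k)).filter (fun x => x ≠ 0))
            + f ((List.replicate (q'+1) (w-k)).filter (fun x => x ≠ 0)))) * hc
      rw [hXsum] at hA
      -- rewrite head term of hA using IH at w+1
      have hHead := IH (w+1) (by omega)
      rw [show w+1-1 = w from rfl,
        filter_cons_rep_ne _ _ _ (by omega) (by omega),
        filter_rep_ne _ _ (by omega)] at hHead
      rw [hHead] at hA
      -- now the goal
      rw [show w+1-1 = w from rfl,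
        filter_cons_rep_ne _ _ _ (by omega) (by omega),
        filter_rep_ne _ _ (by omega), hB, hC, hA]
      rw [← Finset.mul_sum]
      have hsplit : ∑ k ∈ Finset.Icc 1 w, (((w.choose k : ℕ) : ℤ) * odf k *
            (f (((w+1-k) :: List.replicate q' (w-k)).filter (fun x => x ≠ 0))
              + f ((List.replicate (q'+1) (w-k)).filter (fun x => x ≠ 0))))
          = (∑ k ∈ Finset.Icc 1 w, ((w.choose k : ℕ) : ℤ) * odf k *
              f (((w+1-k) :: List.replicate q' (w-k)).filter (fun x => x ≠ 0)))
            + ∑ k ∈ Finset.Icc 1 w, ((w.choose k : ℕ) : ℤ) * odf k *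
              f ((List.replicate (q'+1) (w-k)).filter (fun x => x ≠ 0)) := by
        rw [← Finset.sum_add_distrib]
        exact Finset.sum_congr rfl fun k _ => by ring
      rw [hsplit]
      ring
end

section
/- For all u, q ≥ 1, f((u+2)^q, 1) = (2u + q + 1) f((u+1)^q, 1) + 2u f(u^q, 1), where (v^q, 1) denotes the partition with q parts equal to v followed by one part equal to 1. -/
lemma odf_zero : odf 0 = 1 := by simp [odf]
lemma odf_succ (k : ℕ) : odf (k+1) = (2*(k:ℤ)+1) * odf k := by
  unfold odf
  rw [Finset.prod_Icc_succ_top (by omega : 1 ≤ k+1)]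
  push_cast; ring

/-- The binomial convolution with odd double factorials. -/
def Tconv (a : ℕ → ℤ) (v : ℕ) : ℤ :=
  ∑ k ∈ Finset.range (v+1), (v.choose k : ℤ) * odf k * a (v - k)

lemma Tconv_zero (a : ℕ → ℤ) : Tconv a 0 = a 0 := by simp [Tconv, odf_zero]

lemma Tconv_pascal (a : ℕ → ℤ) (m : ℕ) :
    Tconv a (m+1)
      = (∑ k ∈ Finset.range (m+1), (m.choose k : ℤ) * odf k * a (m+1-k))
        + ∑ k ∈ Finset.range (m+1), (m.choose k : ℤ) * odf (k+1) * a (m-k) := by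
  unfold Tconv
  rw [Finset.sum_range_succ' (fun k => ((m+1).choose k : ℤ) * odf k * a (m+1-k)) (m+1)]
  rw [Finset.sum_range_succ' (fun k => (m.choose k : ℤ) * odf k * a (m+1-k)) m]
  have h1 : ∀ k ∈ Finset.range (m+1),
      (((m+1).choose (k+1) : ℤ)) * odf (k+1) * a (m+1-(k+1))
        = (m.choose k : ℤ) * odf (k+1) * a (m-k)
          + (m.choose (k+1) : ℤ) * odf (k+1) * a (m-k) := by
    intro k hk
    have : (m+1).choose (k+1) = m.choose k + m.choose (k+1) := Nat.choose_succ_succ m k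
    have h2 : m+1-(k+1) = m-k := by omega
    rw [this, h2]; push_cast; ring
  rw [Finset.sum_congr rfl h1, Finset.sum_add_distrib]
  have h3 : ∀ k ∈ Finset.range m,
      ((m.choose (k+1) : ℤ)) * odf (k+1) * a (m+1-(k+1))
        = (m.choose (k+1) : ℤ) * odf (k+1) * a (m-k) := by
    intro k hk
    have h2 : m+1-(k+1) = m-k := by omega
    rw [h2]
  rw [Finset.sum_congr rfl h3]
  have h4 : ∑ k ∈ Finset.range (m+1), ((m.choose (k+1) : ℤ)) * odf (k+1) * a (m-k)
      = ∑ k ∈ Finset.range m, ((m.choose (k+1) : ℤ)) * odf (k+1) * a (m-k) := by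
    rw [Finset.sum_range_succ, Nat.choose_succ_self]
    simp
  rw [← h4]
  simp only [Nat.choose_zero_right, Nat.cast_one, odf_zero]
  ring

lemma Tconv_step (c : ℤ) (a : ℕ → ℤ)
    (ha : ∀ m : ℕ, a (m+1) = (2*(m:ℤ)+c) * a m + 2*(m:ℤ) * a (m-1)) :
    ∀ m : ℕ, Tconv a (m+1) = (2*(m:ℤ)+c+1) * Tconv a m + 2*(m:ℤ) * Tconv a (m-1) := by
  intro m
  match m with
  | 0 =>
    have h0 := ha 0
    simp only [Nat.cast_zero] at h0 ⊢
    rw [Tconv_zero]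
    have : Tconv a 1 = a 1 + a 0 := by
      simp [Tconv, Finset.sum_range_succ, odf_zero, odf_one]
    rw [this]; linarith
  | n+1 =>
    set S3 : ℤ := ∑ k ∈ Finset.range (n+1), (n.choose k : ℤ) * odf k * a (n+1-k) with hS3
    set S4 : ℤ := ∑ k ∈ Finset.range (n+1), (n.choose k : ℤ) * odf (k+1) * a (n-k) with hS4
    have hps : Tconv a (n+1) = S3 + S4 := Tconv_pascal a n
    have hS2 : (∑ k ∈ Finset.range (n+2), ((n+1).choose k : ℤ) * odf (k+1) * a (n+1-k))
        = Tconv a (n+1) + 2*((n:ℤ)+1) * S4 := by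
      have e1 : ∀ k ∈ Finset.range (n+2),
          ((n+1).choose k : ℤ) * odf (k+1) * a (n+1-k)
            = ((n+1).choose k : ℤ) * odf k * a (n+1-k)
              + 2 * ((k:ℤ) * ((n+1).choose k : ℤ) * odf k * a (n+1-k)) := by
        intro k hk; rw [odf_succ]; ring
      rw [Finset.sum_congr rfl e1, Finset.sum_add_distrib, ← Finset.mul_sum]
      have e2 : (∑ k ∈ Finset.range (n+2), (k:ℤ) * ((n+1).choose k : ℤ) * odf k * a (n+1-k))
          = ((n:ℤ)+1) * S4 := by
        rw [Finset.sum_range_succ'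
          (fun k => (k:ℤ) * ((n+1).choose k : ℤ) * odf k * a (n+1-k)) (n+1)]
        simp only [Nat.cast_zero, zero_mul, add_zero]
        rw [hS4, Finset.mul_sum]
        apply Finset.sum_congr rfl
        intro k hk
        have hc : (n+1) * n.choose k = (n+1).choose (k+1) * (k+1) := Nat.add_one_mul_choose_eq n k
        have hc' : ((n:ℤ)+1) * (n.choose k : ℤ) = ((n+1).choose (k+1) : ℤ) * ((k:ℤ)+1) := by
          exact_mod_cast hc
        have h2 : n+1-(k+1) = n-k := by omega
        rw [h2]
        push_cast
        linear_combination (-(odf (k+1) * a (n-k))) * hc'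
      rw [e2]
      unfold Tconv
      ring
    have hS1 : (∑ k ∈ Finset.range (n+2), ((n+1).choose k : ℤ) * odf k * a (n+2-k))
        = c * Tconv a (n+1) + 2*((n:ℤ)+1) * S3 + 2*((n:ℤ)+1) * Tconv a n := by
      have e1 : ∀ k ∈ Finset.range (n+2),
          ((n+1).choose k : ℤ) * odf k * a (n+2-k)
            = c * (((n+1).choose k : ℤ) * odf k * a (n+1-k))
              + 2 * (((n+1-k : ℕ):ℤ) * ((n+1).choose k : ℤ) * odf k * a (n+1-k))
              + 2 * (((n+1-k : ℕ):ℤ) * ((n+1).choose k : ℤ) * odf k * a (n-k)) := by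
        intro k hk
        simp only [Finset.mem_range] at hk
        have h2 : n+2-k = (n+1-k)+1 := by omega
        have h3 : (n+1-k) - 1 = n-k := by omega
        rw [h2, ha (n+1-k), h3]
        ring
      rw [Finset.sum_congr rfl e1]
      rw [Finset.sum_add_distrib, Finset.sum_add_distrib, ← Finset.mul_sum, ← Finset.mul_sum,
        ← Finset.mul_sum]
      have key : ∀ k ∈ Finset.range (n+2),
          (((n+1-k : ℕ):ℤ) * ((n+1).choose k : ℤ)) = ((n:ℤ)+1) * (n.choose k : ℤ) := by
        intro k hk
        have := Nat.choose_mul_succ_eq n k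
        have : (n.choose k : ℤ) * ((n:ℤ)+1) = ((n+1).choose k : ℤ) * ((n+1-k : ℕ):ℤ) := by
          exact_mod_cast this
        linarith
      have e3 : (∑ k ∈ Finset.range (n+2), ((n+1-k : ℕ):ℤ) * ((n+1).choose k : ℤ) * odf k * a (n+1-k))
          = ((n:ℤ)+1) * S3 := by
        have : ∀ k ∈ Finset.range (n+2),
            ((n+1-k : ℕ):ℤ) * ((n+1).choose k : ℤ) * odf k * a (n+1-k)
              = ((n:ℤ)+1) * ((n.choose k : ℤ) * odf k * a (n+1-k)) := by
          intro k hk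
          have h := key k hk
          linear_combination (odf k * a (n+1-k)) * h
        rw [Finset.sum_congr rfl this, ← Finset.mul_sum, hS3]
        rw [Finset.sum_range_succ, Nat.choose_succ_self]
        simp
      have e4 : (∑ k ∈ Finset.range (n+2), ((n+1-k : ℕ):ℤ) * ((n+1).choose k : ℤ) * odf k * a (n-k))
          = ((n:ℤ)+1) * Tconv a n := by
        have : ∀ k ∈ Finset.range (n+2),
            ((n+1-k : ℕ):ℤ) * ((n+1).choose k : ℤ) * odf k * a (n-k)
              = ((n:ℤ)+1) * ((n.choose k : ℤ) * odf k * a (n-k)) := by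
          intro k hk
          have h := key k hk
          linear_combination (odf k * a (n-k)) * h
        rw [Finset.sum_congr rfl this, ← Finset.mul_sum]
        unfold Tconv
        rw [Finset.sum_range_succ, Nat.choose_succ_self]
        simp
      rw [e3, e4]
      unfold Tconv
      ring
    have hfull : Tconv a (n+2) = (∑ k ∈ Finset.range (n+2), ((n+1).choose k : ℤ) * odf k * a (n+2-k))
        + ∑ k ∈ Finset.range (n+2), ((n+1).choose k : ℤ) * odf (k+1) * a (n+1-k) :=
      Tconv_pascal a (n+1)
    have hgoal : Tconv a (n+2)
        = (c+1) * Tconv a (n+1) + 2*((n:ℤ)+1) * Tconv a n + 2*((n:ℤ)+1) * (S3 + S4) := by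
      rw [hfull, hS1, hS2]; ring
    rw [← hps] at hgoal
    push_cast
    linear_combination hgoal

lemma subHat_replicate (k v q : ℕ) :
    subHat k (List.replicate q v) = if v - k = 0 then [] else List.replicate q (v - k) := by
  unfold subHat
  rw [List.map_replicate]
  induction q with
  | zero => simp
  | succ n ih =>
    rw [List.replicate_succ, List.filter_cons]
    by_cases h : v - k = 0
    · simp only [h, if_true] at ih
      simp [h, ih]
    · simp only [h, if_false] at ih
      simp only [h, if_false]
      simp [h, ih]

lemma chain_rep (q v w : ℕ) (hw : w ≤ v) :
    (List.replicate q v ++ [w]).Chain' (· ≥ ·) := by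
  induction q with
  | zero => exact List.isChain_singleton w
  | succ n ih =>
    rw [List.replicate_succ, List.cons_append]
    apply List.IsChain.cons
    · exact ih
    · intro b hb
      cases n with
      | zero => simp at hb; omega
      | succ p => rw [List.replicate_succ, List.cons_append] at hb; simp at hb; omega

lemma part_rep_concat (q v w : ℕ) (hw : w ≤ v) (hw0 : 0 < w) :
    IsPartition (List.replicate q v ++ [w]) := by
  constructor
  · exact chain_rep q v w hw
  · intro x hx
    rw [List.mem_append] at hx
    rcases hx with hx | hx
    · have := List.eq_of_mem_replicate hx; omega
    · simp at hx; omega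

lemma sum_range_Icc (g : ℕ → ℤ) (v : ℕ) :
    ∑ k ∈ Finset.range (v+1), g k = g 0 + ∑ k ∈ Finset.Icc 1 v, g k := by
  induction v with
  | zero => simp
  | succ n ih =>
    rw [Finset.sum_range_succ, ih, Finset.sum_Icc_succ_top (by omega : 1 ≤ n+1)]
    ring

theorem stmt15
    (d : Nat → Int) (hd0 : d 0 = 1) (hd1 : d 1 = 0)
    (hd : ∀ n : Nat, 2 ≤ n → d n = 2 * ((n : Int) - 1) * (d (n - 1) + d (n - 2)))
    (f : List Nat → Int) (hf0 : f [] = 1) (hf1 : ∀ m : Nat, f [m] = d m)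
    (hfr : ∀ l : List Nat, IsPartition l → 2 ≤ l.length →
      f l = f l.dropLast + ∑ k ∈ Finset.Icc 1 (l.getLastD 0),
        ((l.getLastD 0).choose k : Int) * odf k * f (subHat k l.dropLast)) :
    ∀ u q : Nat, 1 ≤ u → 1 ≤ q →
      f (List.replicate q (u + 2) ++ [1])
        = (2 * (u : Int) + (q : Int) + 1) * f (List.replicate q (u + 1) ++ [1])
          + 2 * (u : Int) * f (List.replicate q u ++ [1]) := by
  intro u q hu hq
  set A : ℕ → ℕ → ℤ := fun v p => if v = 0 then 1 else f (List.replicate p v) with hA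
  have hA0 : ∀ p, A 0 p = 1 := by intro p; simp [hA]
  have hApos : ∀ v p, 1 ≤ v → A v p = f (List.replicate p v) := by
    intro v p hv
    have hv' : v ≠ 0 := by omega
    simp [hA, hv']
  have hAsub : ∀ p k v, f (subHat k (List.replicate p v)) = A (v-k) p := by
    intro p k v
    rw [subHat_replicate]
    by_cases h : v - k = 0
    · simp only [h, if_true, hA0, hf0]
    · simp only [h, if_false]
      rw [hApos _ _ (by omega)]
  have hA1 : ∀ v, A v 1 = d v := by
    intro v
    cases v with
    | zero => rw [hA0, hd0]
    | succ n =>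
      rw [hApos _ _ (by omega)]
      have : List.replicate 1 (n+1) = [n+1] := rfl
      rw [this, hf1]
  have hconv : ∀ p, 1 ≤ p → ∀ v, A v (p+1) = Tconv (fun w => A w p) v := by
    intro p hp v
    cases v with
    | zero => rw [Tconv_zero, hA0, hA0]
    | succ w =>
      have hpart : IsPartition (List.replicate (p+1) (w+1)) := by
        rw [List.replicate_succ']
        exact part_rep_concat p (w+1) (w+1) le_rfl (by omega)
      have hlen : 2 ≤ (List.replicate (p+1) (w+1)).length := by
        rw [List.length_replicate]; omega
      have hlast : (List.replicate (p+1) (w+1)).getLastD 0 = w+1 := by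
        rw [List.replicate_succ']
        exact List.getLastD_concat
      have hdrop : (List.replicate (p+1) (w+1)).dropLast = List.replicate p (w+1) := by
        rw [List.replicate_succ']
        exact List.dropLast_concat
      have hl := hfr (List.replicate (p+1) (w+1)) hpart hlen
      rw [hlast, hdrop] at hl
      have hsum : ∀ k ∈ Finset.Icc 1 (w+1),
          ((w+1).choose k : ℤ) * odf k * f (subHat k (List.replicate p (w+1)))
            = ((w+1).choose k : ℤ) * odf k * A (w+1-k) p := by
        intro k hk
        rw [hAsub]
      rw [Finset.sum_congr rfl hsum] at hl
      rw [hApos _ _ (by omega), hl]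
      unfold Tconv
      rw [sum_range_Icc (fun k => ((w+1).choose k : ℤ) * odf k * A (w+1-k) p) (w+1)]
      simp only [Nat.choose_zero_right, Nat.cast_one, odf_zero, Nat.sub_zero, one_mul]
      rw [hApos _ _ (by omega)]
  have hkey : ∀ p : ℕ, ∀ m : ℕ,
      A (m+1) (p+1) = (2*(m:ℤ) + (p:ℤ)) * A m (p+1) + 2*(m:ℤ) * A (m-1) (p+1) := by
    intro p
    induction p with
    | zero =>
      intro m
      simp only [Nat.cast_zero, add_zero]
      rw [hA1, hA1, hA1]
      cases m with
      | zero => simp [hd1]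
      | succ n =>
        have h2 : d (n+2) = 2 * ((n:ℤ)+1) * (d (n+1) + d n) := by
          have := hd (n+2) (by omega)
          have e1 : n+2-1 = n+1 := by omega
          have e2 : n+2-2 = n := by omega
          rw [e1, e2] at this
          push_cast at this ⊢
          linarith
        have e3 : n+1-1 = n := by omega
        rw [e3]
        push_cast
        linarith
    | succ p ih =>
      intro m
      have hstep := Tconv_step (p:ℤ) (fun w => A w (p+1)) (by
        intro m'
        simpa using ih m') m
      have c1 := hconv (p+1) (by omega) (m+1)
      have c2 := hconv (p+1) (by omega) m
      have c3 := hconv (p+1) (by omega) (m-1)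
      rw [← c1, ← c2, ← c3] at hstep
      rw [hstep]
      push_cast
      ring
  obtain ⟨p, rfl⟩ : ∃ p, q = p + 1 := ⟨q-1, by omega⟩
  have hG : ∀ v, 1 ≤ v → f (List.replicate (p+1) v ++ [1]) = A v (p+1) + A (v-1) (p+1) := by
    intro v hv
    have hpart : IsPartition (List.replicate (p+1) v ++ [1]) :=
      part_rep_concat (p+1) v 1 (by omega) (by omega)
    have hlen : 2 ≤ (List.replicate (p+1) v ++ [1]).length := by
      rw [List.length_append, List.length_replicate]; simp
    have hlast : (List.replicate (p+1) v ++ [1]).getLastD 0 = 1 := List.getLastD_concat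
    have hdrop : (List.replicate (p+1) v ++ [1]).dropLast = List.replicate (p+1) v :=
      List.dropLast_concat
    have hl := hfr (List.replicate (p+1) v ++ [1]) hpart hlen
    rw [hlast, hdrop] at hl
    rw [hl, Finset.Icc_self, Finset.sum_singleton, hAsub, hApos _ _ hv]
    simp [odf_one]
  have g2 := hG (u+2) (by omega)
  have g1 := hG (u+1) (by omega)
  have g0 := hG u hu
  have e1 : u+2-1 = u+1 := by omega
  have e2 : u+1-1 = u := by omega
  rw [e1] at g2
  rw [e2] at g1
  rw [g2, g1, g0]
  have h1 := hkey p (u+1)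
  have h2 := hkey p u
  rw [e2] at h1
  push_cast at h1 h2 ⊢
  linear_combination h1 + h2
end

section
/- Let λ and λ' be partitions of n with the same first part, λ strictly dominated by λ'. Then there exists a finite sequence of partitions γ¹ = λ, γ², …, γᵗ = λ' of n, all with the same first part, such that each γ^{q+1} is obtained from γ^q by increasing the i-th part by 1 and decreasing the j-th part by 1 for some 2 ≤ i < j ≤ ℓ(γ^q) with γ^q_{i-1} > γ^q_i and (j = ℓ(γ^q) or γ^q_j > γ^q_{j+1}), deleting any resulting zero part. -/
def Psum (l : List Nat) (k : Nat) : Nat := ∑ t ∈ Finset.range k, l.getD t 0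

lemma aux_getD_succ_le {l : List Nat} (h : IsPartition l) (t : Nat) :
    l.getD (t+1) 0 ≤ l.getD t 0 := by
  rcases Nat.lt_or_ge (t+1) l.length with hlt | hge
  · rw [List.getD_eq_getElem l 0 hlt, List.getD_eq_getElem l 0 (by omega : t < l.length)]
    have := List.isChain_iff_getElem.mp h.1 t (by omega)
    simpa using this
  · rw [List.getD_eq_default l 0 hge]; omega

lemma aux_getD_anti {l : List Nat} (h : IsPartition l) {s t : Nat} (hst : s ≤ t) :
    l.getD t 0 ≤ l.getD s 0 := by
  induction t with
  | zero =>
    have : s = 0 := by omega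
    subst this; rfl
  | succ t ih =>
    rcases Nat.lt_or_ge s (t+1) with h1 | h1
    · exact le_trans (aux_getD_succ_le h t) (ih (by omega))
    · have : s = t + 1 := by omega
      subst this; rfl

lemma aux_pos {l : List Nat} (h : IsPartition l) {t : Nat} (ht : t < l.length) :
    0 < l.getD t 0 := by
  rw [List.getD_eq_getElem l 0 ht]
  exact h.2 _ (List.getElem_mem ht)

lemma aux_lt_length {l : List Nat} {t : Nat} (h : 0 < l.getD t 0) : t < l.length := by
  by_contra hc
  rw [List.getD_eq_default l 0 (by omega)] at h; omega

lemma aux_headD (l : List Nat) : l.headD 0 = l.getD 0 0 := by cases l <;> rfl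

lemma aux_sum_eq_psum (l : List Nat) : ∀ N, l.length ≤ N → l.sum = Psum l N := by
  induction l with
  | nil => intro N _; simp [Psum]
  | cons a l ih =>
    intro N hN
    cases N with
    | zero => simp at hN
    | succ N =>
      have : Psum (a :: l) (N+1) = a + Psum l N := by
        unfold Psum
        rw [Finset.sum_range_succ']
        simp [List.getD]
        ring
      rw [this, List.sum_cons, ih N (by simpa using hN)]

lemma aux_length_le_sum {l : List Nat} (h : IsPartition l) : l.length ≤ l.sum := by
  induction l with
  | nil => simp
  | cons a l ih =>
    have ha : 0 < a := h.2 a (by simp)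
    have hl : IsPartition l := ⟨List.IsChain.tail (l := a :: l) h.1, fun x hx => h.2 x (by simp [hx])⟩
    simp only [List.length_cons, List.sum_cons]
    have := ih hl
    omega

lemma aux_ext {l l' : List Nat} (h : IsPartition l) (h' : IsPartition l')
    (he : ∀ t, l.getD t 0 = l'.getD t 0) : l = l' := by
  have hlen : l.length = l'.length := by
    by_contra hc
    rcases Nat.lt_or_ge l.length l'.length with h1 | h1
    · have := aux_pos h' (t := l.length) h1
      rw [← he, List.getD_eq_default l 0 (le_refl _)] at this; omega
    · have h2 : l'.length < l.length := by omega
      have := aux_pos h (t := l'.length) h2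
      rw [he, List.getD_eq_default l' 0 (le_refl _)] at this; omega
  apply List.ext_getElem hlen
  intro i h1 h2
  have := he i
  rwa [List.getD_eq_getElem l 0 h1, List.getD_eq_getElem l' 0 h2] at this

lemma aux_getD_set (l : List Nat) (i v t : Nat) :
    (l.set i v).getD t 0 = if t = i ∧ i < l.length then v else l.getD t 0 := by
  rcases Nat.lt_or_ge t l.length with hlt | hge
  · rw [List.getD_eq_getElem _ 0 (by simpa using hlt)]
    rw [List.getElem_set]
    split_ifs with h1 h2 h2
    · rfl
    · omega
    · omega
    · rw [List.getD_eq_getElem l 0 hlt]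
  · rw [List.getD_eq_default _ 0 (by simpa using hge), List.getD_eq_default l 0 hge]
    split_ifs with h1
    · omega
    · rfl

lemma aux_chain'_of_getD {l : List Nat} (h : ∀ t, l.getD (t+1) 0 ≤ l.getD t 0) :
    l.Chain' (· ≥ ·) := by
  apply List.isChain_iff_getElem.mpr
  intro i hi
  have := h i
  rwa [List.getD_eq_getElem l 0 (by omega), List.getD_eq_getElem l 0 (by omega)] at this

lemma aux_sumF (g : Nat → Nat) (a b : Nat) (hab : a < b) (hgb : 1 ≤ g b) (k : Nat) :
    ∑ t ∈ Finset.range k, (if t = a then g a + 1 else if t = b then g b - 1 else g t)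
      = ∑ t ∈ Finset.range k, g t + (if a < k ∧ k ≤ b then 1 else 0) := by
  induction k with
  | zero => simp
  | succ k ih =>
    rw [Finset.sum_range_succ, Finset.sum_range_succ, ih]
    rcases eq_or_ne k a with rfl | hka
    · rw [if_pos rfl]; split_ifs <;> omega
    · rw [if_neg hka]
      rcases eq_or_ne k b with rfl | hkb
      · rw [if_pos rfl]; split_ifs <;> omega
      · rw [if_neg hkb]; split_ifs <;> omega

lemma aux_move_getD {l : List Nat} {a b : Nat} (hl : IsPartition l)
    (ha1 : 1 ≤ a) (hab : a < b) (hb : b < l.length)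
    (hbb : l.getD (b+1) 0 < l.getD b 0) :
    ∀ t, (downAt (b+1) (upAt (a+1) l)).getD t 0 =
      if t = a then l.getD a 0 + 1 else if t = b then l.getD b 0 - 1 else l.getD t 0 := by
  have ha : a < l.length := by omega
  set L1 := l.set a (l.getD a 0 + 1) with hL1
  have hL1len : L1.length = l.length := List.length_set
  have hL1get : ∀ t, L1.getD t 0 = if t = a then l.getD a 0 + 1 else l.getD t 0 := by
    intro t
    rw [hL1, aux_getD_set]
    split_ifs with h1 h2 h2 <;> first | rfl | omega
  set L2 := L1.set b (l.getD b 0 - 1) with hL2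
  have hL2len : L2.length = l.length := by rw [hL2, List.length_set, hL1len]
  have hL2get : ∀ t, L2.getD t 0 =
      if t = a then l.getD a 0 + 1 else if t = b then l.getD b 0 - 1 else l.getD t 0 := by
    intro t
    rw [hL2, aux_getD_set]
    rw [hL1len]
    split_ifs with h1 h2 h2 <;> first | rw [hL1get]; simp [h2] | omega | rw [hL1get]; simp_all
  have hm : downAt (b+1) (upAt (a+1) l) = L2.filter (fun x => x ≠ 0) := by
    unfold downAt upAt
    simp only [Nat.add_sub_cancel]
    rw [← hL1]
    have hb' : L1.getD b 0 = l.getD b 0 := by rw [hL1get b, if_neg (by omega)]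
    rw [hb', ← hL2]
  rw [hm]
  -- positivity of l's entries below length
  have hposl : ∀ t, t < l.length → 0 < l.getD t 0 := fun t ht => aux_pos hl ht
  rcases Nat.lt_or_ge 1 (l.getD b 0) with hgb2 | hgb1
  · -- case A : l.getD b 0 ≥ 2, no deletion
    have hfil : L2.filter (fun x => x ≠ 0) = L2 := by
      apply List.filter_eq_self.mpr
      intro x hx
      obtain ⟨t, ht, rfl⟩ := List.mem_iff_getElem.mp hx
      simp only [ne_eq, decide_eq_true_eq]
      rw [← List.getD_eq_getElem L2 0 ht, hL2get]
      have htl : t < l.length := by rwa [hL2len] at ht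
      have := hposl t htl
      split_ifs <;> first | omega | simp
    rw [hfil]
    exact hL2get
  · -- case B : l.getD b 0 = 1, last entry deleted
    have hgb : l.getD b 0 = 1 := by
      have := hposl b hb; omega
    have hlen : l.length = b + 1 := by
      by_contra hc
      have h1 : b + 1 < l.length := by omega
      have := hposl (b+1) h1
      omega
    have hL2b : L2.getD b 0 = 0 := by rw [hL2get, if_neg (by omega), if_pos rfl]; omega
    have hbL2 : b < L2.length := by omega
    have hdrop : L2.drop b = [0] := by
      rw [List.drop_eq_getElem_cons hbL2]
      have h1 : L2.drop (b+1) = [] := List.drop_eq_nil_of_le (by omega)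
      have h2 : L2[b] = 0 := by
        rw [← List.getD_eq_getElem L2 0 hbL2]; exact hL2b
      rw [h1, h2]
    have hsplit : L2 = L2.take b ++ [0] := by
      conv_lhs => rw [← List.take_append_drop b L2]
      rw [hdrop]
    have htake_pos : ∀ x ∈ L2.take b, x ≠ 0 := by
      intro x hx
      obtain ⟨t, ht, rfl⟩ := List.mem_iff_getElem.mp hx
      have htb : t < b := by
        have := ht; rw [List.length_take] at this; omega
      simp only [ne_eq]
      rw [List.getElem_take, ← List.getD_eq_getElem L2 0 (by omega), hL2get]
      have := hposl t (by omega)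
      split_ifs <;> first | omega | simp
    have hfil : L2.filter (fun x => x ≠ 0) = L2.take b := by
      conv_lhs => rw [hsplit]
      rw [List.filter_append]
      have h1 : List.filter (fun x => decide (x ≠ 0)) [0] = [] := by decide
      rw [h1, List.append_nil]
      apply List.filter_eq_self.mpr
      intro x hx
      simpa using htake_pos x hx
    rw [hfil]
    intro t
    rcases Nat.lt_or_ge t b with htb | htb
    · have ht' : t < (L2.take b).length := by rw [List.length_take]; omega
      rw [List.getD_eq_getElem _ 0 ht', List.getElem_take,
        ← List.getD_eq_getElem L2 0 (by omega), hL2get]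
    · have hle : (L2.take b).length ≤ t := by rw [List.length_take]; omega
      rw [List.getD_eq_default _ 0 hle]
      split_ifs with h1 h2
      · omega
      · omega
      · rw [List.getD_eq_default l 0 (by omega)]

lemma aux_move_part {l : List Nat} {a b : Nat} (hl : IsPartition l)
    (ha1 : 1 ≤ a) (hab : a < b) (hb : b < l.length)
    (haa : l.getD a 0 < l.getD (a-1) 0)
    (hbb : l.getD (b+1) 0 < l.getD b 0) :
    IsPartition (downAt (b+1) (upAt (a+1) l)) ∧
    (downAt (b+1) (upAt (a+1) l)).sum = l.sum ∧
    (∀ k, Psum (downAt (b+1) (upAt (a+1) l)) k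
        = Psum l k + (if a < k ∧ k ≤ b then 1 else 0)) := by
  have hF := aux_move_getD hl ha1 hab hb hbb
  set m := downAt (b+1) (upAt (a+1) l) with hmdef
  have hgb : 1 ≤ l.getD b 0 := by omega
  have hPs : ∀ k, Psum m k = Psum l k + (if a < k ∧ k ≤ b then 1 else 0) := by
    intro k
    unfold Psum
    rw [Finset.sum_congr rfl (fun t _ => hF t)]
    exact aux_sumF _ a b hab hgb k
  have hlenm : m.length ≤ l.length := by
    rw [hmdef]
    unfold downAt upAt
    calc _ ≤ ((l.set (a+1-1) (l.getD (a+1-1) 0 + 1)).set (b+1-1) _).length :=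
          List.length_filter_le _ _
    _ = l.length := by rw [List.length_set, List.length_set]
  refine ⟨⟨?_, ?_⟩, ?_, hPs⟩
  · apply aux_chain'_of_getD
    intro t
    have key1 : t+1 = a → l.getD a 0 < l.getD t 0 := by
      intro h
      have h2 : a - 1 = t := by omega
      have h3 := haa
      rwa [h2] at h3
    have key2 : t ≤ b → l.getD b 0 ≤ l.getD t 0 := fun h => aux_getD_anti hl h
    have key3 : t = a → l.getD (t+1) 0 ≤ l.getD a 0 := by
      intro h; subst h; exact aux_getD_succ_le hl t
    have key4 : t = b → l.getD (t+1) 0 < l.getD b 0 := by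
      intro h; subst h; exact hbb
    have key5 := aux_getD_succ_le hl t
    have hba : l.getD b 0 ≤ l.getD a 0 := aux_getD_anti hl hab.le
    rw [hF t, hF (t+1)]
    split_ifs <;> omega
  · intro x hx
    rw [hmdef] at hx
    unfold downAt at hx
    have := List.of_mem_filter hx
    simp only [ne_eq, decide_eq_true_eq] at this
    omega
  · rw [aux_sum_eq_psum m l.length hlenm, aux_sum_eq_psum l l.length le_rfl, hPs,
      if_neg (by omega), Nat.add_zero]

lemma aux_step {lam' γ : List Nat} (h' : IsPartition lam') (hγ : IsPartition γ)
    (hsum : γ.sum = lam'.sum) (hhead : γ.getD 0 0 = lam'.getD 0 0)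
    (hdom : ∀ k, Psum γ k ≤ Psum lam' k) (hne : γ ≠ lam') :
    ∃ a b, 1 ≤ a ∧ a < b ∧ b < γ.length
      ∧ γ.getD a 0 < γ.getD (a-1) 0 ∧ γ.getD (b+1) 0 < γ.getD b 0
      ∧ IsPartition (downAt (b+1) (upAt (a+1) γ))
      ∧ (downAt (b+1) (upAt (a+1) γ)).sum = lam'.sum
      ∧ (downAt (b+1) (upAt (a+1) γ)).getD 0 0 = lam'.getD 0 0
      ∧ (∀ k, Psum (downAt (b+1) (upAt (a+1) γ)) k ≤ Psum lam' k)
      ∧ ∑ k ∈ Finset.range (lam'.sum + 1), (Psum lam' k - Psum (downAt (b+1) (upAt (a+1) γ)) k)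
        < ∑ k ∈ Finset.range (lam'.sum + 1), (Psum lam' k - Psum γ k) := by
  have hex : ∃ t, γ.getD t 0 ≠ lam'.getD t 0 := by
    by_contra hc
    push_neg at hc
    exact hne (aux_ext hγ h' hc)
  set a := Nat.find hex with hadef
  have hane : γ.getD a 0 ≠ lam'.getD a 0 := Nat.find_spec hex
  have hprefix : ∀ t < a, γ.getD t 0 = lam'.getD t 0 := by
    intro t ht
    have := Nat.find_min hex ht
    exact of_not_not this
  have hPa : Psum γ a = Psum lam' a :=
    Finset.sum_congr rfl (fun t ht => hprefix t (Finset.mem_range.mp ht))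
  have ha_lt : γ.getD a 0 < lam'.getD a 0 := by
    have h1 := hdom (a+1)
    rw [Psum, Psum, Finset.sum_range_succ, Finset.sum_range_succ] at h1
    rw [Psum, Psum] at hPa
    omega
  have ha1 : 1 ≤ a := by
    rcases Nat.eq_zero_or_pos a with h0 | h0
    · rw [h0] at hane; exact absurd hhead hane
    · exact h0
  have haa : γ.getD a 0 < γ.getD (a-1) 0 := by
    have e := hprefix (a-1) (by omega)
    have h2 : lam'.getD a 0 ≤ lam'.getD (a-1) 0 := aux_getD_anti h' (by omega)
    omega
  have hNγ : γ.length ≤ lam'.sum := by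
    have := aux_length_le_sum hγ; omega
  have hN' : lam'.length ≤ lam'.sum := aux_length_le_sum h'
  have haN : a ≤ γ.length := by
    have := aux_lt_length (show 0 < γ.getD (a-1) 0 by omega)
    omega
  set N := lam'.sum + 1 with hNdef
  have hPN : Psum γ N = Psum lam' N := by
    rw [← aux_sum_eq_psum γ N (by omega), ← aux_sum_eq_psum lam' N (by omega), hsum]
  have hmono' : Psum lam' (a+1) ≤ Psum lam' N := by
    apply Finset.sum_le_sum_of_subset
    apply Finset.range_subset_range.mpr
    omega
  have hPa1 : Psum γ (a+1) < Psum lam' (a+1) := by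
    rw [Psum, Psum, Finset.sum_range_succ, Finset.sum_range_succ]
    rw [Psum, Psum] at hPa
    omega
  have hpos_next : 0 < γ.getD (a+1) 0 := by
    by_contra h0
    push_neg at h0
    have hstable : Psum γ N = Psum γ (a+1) := by
      rw [Psum, Psum, ← Finset.sum_range_add_sum_Ico _ (show a+1 ≤ N by omega)]
      have : ∑ t ∈ Finset.Ico (a+1) N, γ.getD t 0 = 0 := by
        apply Finset.sum_eq_zero
        intro t ht
        have h1 := aux_getD_anti hγ (Finset.mem_Ico.mp ht).1
        omega
      omega
    omega
  have hlen1 : a + 1 < γ.length := aux_lt_length hpos_next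
  set b := Nat.findGreatest (fun t => γ.getD t 0 = γ.getD (a+1) 0) γ.length with hbdef
  have hble : b ≤ γ.length := Nat.findGreatest_le _
  have hab1 : a + 1 ≤ b := Nat.le_findGreatest (P := fun t => γ.getD t 0 = γ.getD (a+1) 0) (le_of_lt hlen1) rfl
  have hbspec : γ.getD b 0 = γ.getD (a+1) 0 :=
    Nat.findGreatest_spec (P := fun t => γ.getD t 0 = γ.getD (a+1) 0) (le_of_lt hlen1) rfl
  have hb : b < γ.length := by
    rcases Nat.lt_or_ge b γ.length with h1 | h1
    · exact h1
    · exfalso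
      have : γ.getD b 0 = 0 := List.getD_eq_default γ 0 h1
      omega
  have hbb : γ.getD (b+1) 0 < γ.getD b 0 := by
    have hle := aux_getD_succ_le hγ b
    by_contra hc
    have heq : γ.getD (b+1) 0 = γ.getD (a+1) 0 := by omega
    exact Nat.findGreatest_is_greatest (P := fun t => γ.getD t 0 = γ.getD (a+1) 0) (show b < b+1 by omega) (show b+1 ≤ γ.length by omega) heq
  have hblock : ∀ t, a+1 ≤ t → t ≤ b → γ.getD t 0 = γ.getD (a+1) 0 := by
    intro t h1 h2
    have u1 := aux_getD_anti hγ h1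
    have u2 := aux_getD_anti hγ h2
    omega
  have hstrict : ∀ k, a+1 ≤ k → k ≤ b → Psum γ k < Psum lam' k := by
    intro k hk1
    induction k, hk1 using Nat.le_induction with
    | base => intro _; exact hPa1
    | succ k hk ih =>
      intro hk2
      have IH := ih (by omega)
      have hd1 := hdom (k+1)
      rcases Nat.lt_or_ge (Psum γ (k+1)) (Psum lam' (k+1)) with h1 | h1
      · exact h1
      · exfalso
        have heq : Psum γ (k+1) = Psum lam' (k+1) := by omega
        have e1 : Psum γ (k+1) = Psum γ k + γ.getD k 0 := by
          unfold Psum; rw [Finset.sum_range_succ]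
        have e2 : Psum lam' (k+1) = Psum lam' k + lam'.getD k 0 := by
          unfold Psum; rw [Finset.sum_range_succ]
        have e3 : Psum γ (k+2) = Psum γ (k+1) + γ.getD (k+1) 0 := by
          unfold Psum; rw [Finset.sum_range_succ]
        have e4 : Psum lam' (k+2) = Psum lam' (k+1) + lam'.getD (k+1) 0 := by
          unfold Psum; rw [Finset.sum_range_succ]
        have hγk : γ.getD (k+1) 0 = γ.getD k 0 := by
          have u1 := hblock (k+1) (by omega) (by omega)
          have u2 := hblock k (by omega) (by omega)
          omega
        have hlm : lam'.getD (k+1) 0 ≤ lam'.getD k 0 := aux_getD_succ_le h' k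
        have hd2 := hdom (k+2)
        omega
  obtain ⟨hpart, hsum2, hPs⟩ := aux_move_part hγ ha1 (by omega : a < b) hb haa hbb
  refine ⟨a, b, ha1, by omega, hb, haa, hbb, hpart, by rw [hsum2, hsum], ?_, ?_, ?_⟩
  · have hF := aux_move_getD hγ ha1 (by omega : a < b) hb hbb
    rw [hF 0, if_neg (by omega), if_neg (by omega)]
    exact hhead
  · intro k
    rw [hPs k]
    split_ifs with h
    · have := hstrict k (by omega) h.2
      omega
    · have := hdom k
      omega
  · apply Finset.sum_lt_sum
    · intro k _
      have u1 := hPs k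
      have u2 := hdom k
      split_ifs at u1 <;> omega
    · refine ⟨a+1, Finset.mem_range.mpr (by omega), ?_⟩
      have h1 := hPs (a+1)
      rw [if_pos (by omega : a < a+1 ∧ a+1 ≤ b)] at h1
      have h2 := hPa1
      omega

lemma aux_chain (lam' : List Nat) (h' : IsPartition lam') :
    ∀ w γ, IsPartition γ → γ.sum = lam'.sum → γ.getD 0 0 = lam'.getD 0 0 →
    (∀ k, Psum γ k ≤ Psum lam' k) →
    (∑ k ∈ Finset.range (lam'.sum + 1), (Psum lam' k - Psum γ k)) ≤ w →
    ∃ (t : Nat) (g : Nat → List Nat), g 0 = γ ∧ g t = lam'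
      ∧ (∀ q ≤ t, IsPartition (g q) ∧ (g q).sum = lam'.sum ∧ (g q).getD 0 0 = lam'.getD 0 0)
      ∧ (∀ q < t, ∃ i j : Nat, 2 ≤ i ∧ i < j ∧ j ≤ (g q).length
          ∧ (g q).getD (i - 1) 0 < (g q).getD (i - 2) 0
          ∧ (j = (g q).length ∨ (g q).getD j 0 < (g q).getD (j - 1) 0)
          ∧ g (q + 1) = downAt j (upAt i (g q))) := by
  intro w
  induction w with
  | zero =>
    intro γ h1 h2 h3 h4 h5
    by_cases hne : γ = lam'
    · subst hne
      refine ⟨0, fun _ => γ, rfl, rfl, ?_, ?_⟩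
      · intro q hq
        exact ⟨h1, h2, h3⟩
      · intro q hq
        omega
    · exfalso
      obtain ⟨a, b, _, _, _, _, _, _, _, _, _, hmeas⟩ := aux_step h' h1 h2 h3 h4 hne
      omega
  | succ w ih =>
    intro γ h1 h2 h3 h4 h5
    by_cases hne : γ = lam'
    · subst hne
      refine ⟨0, fun _ => γ, rfl, rfl, ?_, ?_⟩
      · intro q hq
        exact ⟨h1, h2, h3⟩
      · intro q hq
        omega
    · obtain ⟨a, b, ha1, hab, hb, haa, hbb, hpart, hsum2, hhead2, hdom2, hmeas⟩ :=
        aux_step h' h1 h2 h3 h4 hne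
      obtain ⟨t', g', hg0, hgt, hinv, hstep⟩ :=
        ih (downAt (b+1) (upAt (a+1) γ)) hpart hsum2 hhead2 hdom2 (by omega)
      refine ⟨t'+1, fun q => match q with | 0 => γ | Nat.succ q => g' q, rfl, hgt, ?_, ?_⟩
      · intro q hq
        cases q with
        | zero => exact ⟨h1, h2, h3⟩
        | succ q => exact hinv q (by omega)
      · intro q hq
        cases q with
        | zero =>
          refine ⟨a+1, b+1, by omega, by omega, (by omega : b + 1 ≤ γ.length), haa, Or.inr hbb, ?_⟩
          show g' 0 = _
          rw [hg0]
        | succ q => exact hstep q (by omega)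

theorem stmt18
    (n : Nat)
    (lam lam' : List Nat) (hlam : IsPartition lam) (hlam' : IsPartition lam')
    (hsum : lam.sum = n) (hsum' : lam'.sum = n)
    (hhead : lam.headD 0 = lam'.headD 0)
    (hdom : ∀ k : Nat, ∑ t ∈ Finset.range k, lam.getD t 0 ≤ ∑ t ∈ Finset.range k, lam'.getD t 0)
    (hne : lam ≠ lam') :
    ∃ (t : Nat) (g : Nat → List Nat), g 0 = lam ∧ g t = lam'
      ∧ (∀ q ≤ t, IsPartition (g q) ∧ (g q).sum = n ∧ (g q).headD 0 = lam.headD 0)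
      ∧ (∀ q < t, ∃ i j : Nat, 2 ≤ i ∧ i < j ∧ j ≤ (g q).length
          ∧ (g q).getD (i - 1) 0 < (g q).getD (i - 2) 0
          ∧ (j = (g q).length ∨ (g q).getD j 0 < (g q).getD (j - 1) 0)
          ∧ g (q + 1) = downAt j (upAt i (g q))) := by

  have hs : lam.sum = lam'.sum := by rw [hsum, hsum']
  have hhead2 : lam.getD 0 0 = lam'.getD 0 0 := by
    rw [← aux_headD, ← aux_headD]; exact hhead
  have hdom2 : ∀ k, Psum lam k ≤ Psum lam' k := fun k => hdom k
  obtain ⟨t, g, hg0, hgt, hinv, hstep⟩ :=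
    aux_chain lam' hlam' (∑ k ∈ Finset.range (lam'.sum + 1), (Psum lam' k - Psum lam k))
      lam hlam hs hhead2 hdom2 le_rfl
  refine ⟨t, g, hg0, hgt, ?_, hstep⟩
  intro q hq
  obtain ⟨p1, p2, p3⟩ := hinv q hq
  refine ⟨p1, by rw [p2, hsum'], ?_⟩
  rw [aux_headD, p3, ← aux_headD]
  exact hhead.symm
end

section
/- Let μ be a partition of n of length s ≥ 2 with 2 ≤ i < j ≤ s, μ_{i-1} > μ_i, (j = s or μ_j > μ_{j+1}), and suppose μ₁ = 3, μ_t = 2 for 2 ≤ t ≤ i−1, and μ_t = 1 for i ≤ t ≤ s. Then f(μ(i,j)) = f(μ), where μ(i,j) increases the i-th part by 1 and decreases the j-th part by 1 (deleting a zero part). -/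
lemma set_mid (l₁ l₂ : List Nat) (x y : Nat) : (l₁ ++ x :: l₂).set l₁.length y = l₁ ++ y :: l₂ := by
  rw [List.set_append_right] <;> simp

lemma getD_mid (l₁ l₂ : List Nat) (x : Nat) : (l₁ ++ x :: l₂).getD l₁.length 0 = x := by
  rw [List.getD_eq_getElem?_getD, List.getElem?_append_right le_rfl]; simp

def L (a b : Nat) : List Nat := 3 :: (List.replicate a 2 ++ List.replicate b 1)

lemma part1 (a : Nat) : IsPartition (2 :: List.replicate a 1) := by
  constructor
  · rw [List.Chain', List.isChain_iff_pairwise]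
    simp [List.pairwise_replicate, List.mem_replicate]
  · intro x hx
    simp [List.mem_replicate] at hx
    rcases hx with h | ⟨_, h⟩ <;> omega

lemma part2 (a b : Nat) : IsPartition (L a b) := by
  constructor
  · rw [List.Chain', List.isChain_iff_pairwise]
    constructor
    · intro x hx
      simp [List.mem_append, List.mem_replicate] at hx
      omega
    rw [List.pairwise_append]
    refine ⟨List.pairwise_replicate.2 (by omega), List.pairwise_replicate.2 (by omega), ?_⟩
    intro x hx y hy
    simp [List.mem_replicate] at hx hy
    omega
  · intro x hx
    simp [L, List.mem_append, List.mem_replicate] at hx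
    rcases hx with h | ⟨_, h⟩ | ⟨_, h⟩ <;> omega

lemma sub1_1 (a : Nat) : subHat 1 (2 :: List.replicate a 1) = [1] := by
  simp [subHat, List.filter_replicate]

lemma sub1_2 (a b : Nat) : subHat 1 (L a b) = 2 :: List.replicate a 1 := by
  simp [subHat, L, List.filter_replicate, List.filter_append]

lemma sub2_2 (a : Nat) : subHat 2 (L a 0) = [1] := by
  simp [subHat, L, List.filter_replicate]

lemma L_getD (a b n : Nat) :
    (L a b).getD n 0 = if n = 0 then 3 else if n < a+1 then 2 else if n < a+b+1 then 1 else 0 := by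
  rcases n with _ | n
  · simp [L]
  · simp only [L, List.getD_cons_succ]
    rw [List.getD_eq_getElem?_getD]
    by_cases h : n < a
    · rw [List.getElem?_append_left (by simpa using h)]
      simp only [List.getElem?_replicate, List.length_replicate, if_pos h, Option.getD_some]
      split <;> (try split) <;> first | rfl | omega
    · rw [List.getElem?_append_right (by simpa using not_lt.1 h)]
      simp [List.getElem?_replicate]
      split <;> split <;> first | rfl | omega

section
variable (d : Nat → Int) (hd0 : d 0 = 1) (hd1 : d 1 = 0)
    (hd : ∀ n : Nat, 2 ≤ n → d n = 2 * ((n : Int) - 1) * (d (n - 1) + d (n - 2)))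
    (f : List Nat → Int) (hf0 : f [] = 1) (hf1 : ∀ m : Nat, f [m] = d m)
    (hfr : ∀ l : List Nat, IsPartition l → 2 ≤ l.length →
      f l = f l.dropLast + ∑ k ∈ Finset.Icc 1 (l.getLastD 0),
        ((l.getLastD 0).choose k : Int) * odf k * f (subHat k l.dropLast))

include hd0 hd1 hd hf1 hfr in
lemma lem_c : ∀ a, f (2 :: List.replicate a 1) = 2 := by
  intro a
  induction a with
  | zero =>
    simp [hf1, hd 2 (by norm_num), hd0, hd1]
  | succ a ih =>
    have e : (2 :: List.replicate (a+1) 1) = (2 :: List.replicate a 1) ++ [1] := by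
      simp [List.replicate_succ']
    rw [e, hfr _ (e ▸ part1 (a+1)) (by simp)]
    have hdl : ((2 :: List.replicate a 1) ++ [1]).dropLast = 2 :: List.replicate a 1 := by
      rw [List.dropLast_concat]
    have hgl : ((2 :: List.replicate a 1) ++ [1]).getLastD 0 = 1 := by
      simp [List.getLastD, List.getLast?_concat]
    rw [hdl, hgl]
    simp [sub1_1, hf1, hd1, show odf 1 = 1 from by decide, ih]

include hd0 hd1 hd hf1 hfr in
lemma lem_gb : ∀ a b, f (L a (b+1)) = f (L a b) + 2 := by
  intro a b
  have e : L a (b+1) = L a b ++ [1] := by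
    simp [L, List.replicate_succ']
  rw [e, hfr _ (e ▸ part2 a (b+1)) (by simp [L] <;> omega)]
  have hdl : (L a b ++ [1]).dropLast = L a b := by simp
  rw [hdl]
  simp [sub1_2, show odf 1 = 1 from by decide, lem_c d hd0 hd1 hd f hf1 hfr]

include hd0 hd1 hd hf1 hfr in
lemma lem_g0 : ∀ a, f (L (a+1) 0) = f (L a 0) + 4 := by
  intro a
  have e : L (a+1) 0 = L a 0 ++ [2] := by
    simp [L, List.replicate_succ']
  rw [e, hfr _ (e ▸ part2 (a+1) 0) (by simp [L] <;> omega)]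
  have hdl : (L a 0 ++ [2]).dropLast = L a 0 := by simp
  have hgl : (L a 0 ++ [2]).getLastD 0 = 2 := by simp
  rw [hdl, hgl]
  rw [show Finset.Icc 1 2 = {1, 2} from by decide, Finset.sum_insert (by decide),
    Finset.sum_singleton]
  simp [sub1_2, sub2_2, hf1, hd1, show odf 1 = 1 from by decide,
    show odf 2 = 3 from by decide, lem_c d hd0 hd1 hd f hf1 hfr]
  try ring

include hd0 hd1 hd hf1 hfr in
lemma lem_key : ∀ b a, f (L (a+1) b) = f (L a (b+2)) := by
  intro b
  induction b with
  | zero =>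
    intro a
    rw [lem_g0 d hd0 hd1 hd f hf1 hfr a, lem_gb d hd0 hd1 hd f hf1 hfr a 1,
      lem_gb d hd0 hd1 hd f hf1 hfr a 0]
    ring
  | succ b ih =>
    intro a
    rw [lem_gb d hd0 hd1 hd f hf1 hfr (a+1) b, ih a, ← lem_gb d hd0 hd1 hd f hf1 hfr a (b+2)]

end

theorem stmt19
    (d : Nat → Int) (hd0 : d 0 = 1) (hd1 : d 1 = 0)
    (hd : ∀ n : Nat, 2 ≤ n → d n = 2 * ((n : Int) - 1) * (d (n - 1) + d (n - 2)))
    (f : List Nat → Int) (hf0 : f [] = 1) (hf1 : ∀ m : Nat, f [m] = d m)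
    (hfr : ∀ l : List Nat, IsPartition l → 2 ≤ l.length →
      f l = f l.dropLast + ∑ k ∈ Finset.Icc 1 (l.getLastD 0),
        ((l.getLastD 0).choose k : Int) * odf k * f (subHat k l.dropLast))
    (μ : List Nat) (hμ : IsPartition μ) (hs : 2 ≤ μ.length)
    (i j : Nat) (hi2 : 2 ≤ i) (hij : i < j) (hjs : j ≤ μ.length)
    (hlt : μ.getD (i - 1) 0 < μ.getD (i - 2) 0)
    (hj : j = μ.length ∨ μ.getD j 0 < μ.getD (j - 1) 0)
    (hhead : μ.getD 0 0 = 3)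
    (h2 : ∀ t : Nat, 2 ≤ t → t + 1 ≤ i → μ.getD (t - 1) 0 = 2)
    (h1 : ∀ t : Nat, i ≤ t → t ≤ μ.length → μ.getD (t - 1) 0 = 1) :
    f (downAt j (upAt i μ)) = f μ := by
  have hslen : 2 ≤ μ.length := hs
  set s := μ.length with hsdef
  set a := i - 2 with hadef
  set b := s - i + 1 with hbdef
  set c := j - i - 1 with hcdef
  set e := s - j with hedef
  have hb2 : 2 ≤ b := by omega
  -- μ is the canonical list
  have hμeq : μ = L a b := by
    apply List.ext_getElem
    · simp [L]; omega
    · intro n hn hn'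
      have g1 : μ[n] = μ.getD n 0 := (List.getD_eq_getElem μ 0 hn).symm
      have g2 : (L a b)[n] = (L a b).getD n 0 := (List.getD_eq_getElem _ 0 hn').symm
      rw [g1, g2, L_getD]
      rcases Nat.eq_zero_or_pos n with rfl | hn0
      · simpa using hhead
      · by_cases hcase : n < i - 1
        · have ht := h2 (n+1) (by omega) (by omega)
          rw [Nat.add_sub_cancel] at ht
          rw [ht]
          have e1 : ¬ n = 0 := by omega
          have e2 : n < a + 1 := by omega
          simp [e1, e2]
        · have ht := h1 (n+1) (by omega) (by omega)
          rw [Nat.add_sub_cancel] at ht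
          rw [ht]
          have e1 : ¬ n = 0 := by omega
          have e2 : ¬ n < a + 1 := by omega
          have e3 : n < a + b + 1 := by omega
          simp [e1, e2, e3]
  -- upAt
  have hμ2 : μ = (3 :: List.replicate a 2) ++ 1 :: List.replicate (b-1) 1 := by
    rw [hμeq, show b = (b-1)+1 from by omega]
    simp [L, List.replicate_succ]
  have hidx1 : i - 1 = (3 :: List.replicate a 2).length := by simp; omega
  have hup : upAt i μ = (3 :: List.replicate a 2) ++ 2 :: List.replicate (b-1) 1 := by
    rw [upAt, hμ2, hidx1, getD_mid, set_mid]
  have hup2 : upAt i μ = L (a+1) (b-1) := by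
    rw [hup]
    simp [L, List.replicate_succ', List.append_assoc]
  -- downAt
  have hN : L (a+1) (b-1) =
      (3 :: (List.replicate (a+1) 2 ++ List.replicate c 1)) ++ 1 :: List.replicate e 1 := by
    rw [L, show b - 1 = c + (1 + e) from by omega]
    simp [List.replicate_add, List.replicate_succ, List.append_assoc]
  have hidx2 : j - 1 = (3 :: (List.replicate (a+1) 2 ++ List.replicate c 1)).length := by
    simp; omega
  have hdn : downAt j (upAt i μ) = L (a+1) (c+e) := by
    rw [downAt, hup2, hN, hidx2, getD_mid, set_mid]
    rw [show (1:Nat) - 1 = 0 from rfl, List.filter_append]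
    have hf₁ : (3 :: (List.replicate (a+1) 2 ++ List.replicate c 1)).filter (fun x => x ≠ 0)
        = 3 :: (List.replicate (a+1) 2 ++ List.replicate c 1) := by
      simp [List.filter_append, List.filter_replicate]
    have hf₂ : ((0:Nat) :: List.replicate e 1).filter (fun x => x ≠ 0) = List.replicate e 1 := by
      simp [List.filter_replicate]
    rw [hf₁, hf₂, L, List.cons_append, List.append_assoc, ← List.replicate_add]
  rw [hdn, lem_key d hd0 hd1 hd f hf1 hfr (c+e) a, show c + e + 2 = b from by omega, ← hμeq]
end
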